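/- arXiv:1606.03101 — 4 statements merged into one kernel-verified Lean document; each statement's English description precedes it below -/
import Mathlib

section
/- For every positive integer m, the sum over all positive integers n of m/(max(m,n))² is strictly less than 2. -/
set_option maxHeartbeats 1000000

open Finset Filter

theorem stmt2 (m : ℕ+) :
    ∑' n : ℕ+, ((m : ℝ) / ((max (m : ℕ) (n : ℕ) : ℕ) : ℝ) ^ 2) < 2 := by
  have hm : (0:ℝ) < (m:ℝ) := by exact_mod_cast m.pos
  set f : ℕ → ℝ := fun k => (m : ℝ) / ((max (m : ℕ) (k + 1) : ℕ) : ℝ) ^ 2 with hf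
  -- rewrite the PNat sum as a ℕ sum
  have hre : ∑' n : ℕ+, ((m : ℝ) / ((max (m : ℕ) (n : ℕ) : ℕ) : ℝ) ^ 2) = ∑' k : ℕ, f k := by
    rw [← Equiv.pnatEquivNat.symm.tsum_eq]
    exact tsum_congr fun k => by simp [hf, Equiv.pnatEquivNat, Nat.succPNat]
  rw [hre]
  -- nonnegativity and summability of f
  have hfnonneg : ∀ k, 0 ≤ f k := by
    intro k
    exact div_nonneg hm.le (by positivity)
  have hfle : ∀ k, f k ≤ (m : ℝ) * (1 / ((k:ℝ)+1) ^ 2) := by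
    intro k
    have h1 : (0:ℝ) < ((k:ℝ)+1) ^ 2 := by positivity
    have h2 : ((k:ℝ)+1) ^ 2 ≤ ((max (m : ℕ) (k + 1) : ℕ) : ℝ) ^ 2 := by
      have : ((k:ℝ)+1) ≤ ((max (m : ℕ) (k + 1) : ℕ) : ℝ) := by
        have := le_max_right (m : ℕ) (k+1)
        exact_mod_cast this
      exact pow_le_pow_left₀ (by positivity) this 2
    rw [mul_one_div]
    exact div_le_div_of_nonneg_left hm.le h1 h2
  have hsq : Summable (fun n : ℕ => 1 / (n:ℝ) ^ 2) := Real.summable_one_div_nat_pow.2 one_lt_two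
  have hsq1 : Summable (fun k : ℕ => 1 / ((k:ℝ)+1) ^ 2) := by
    have := (summable_nat_add_iff 1).2 hsq
    apply this.congr
    intro k
    push_cast
    ring
  have hsum1 : Summable (fun k : ℕ => (m : ℝ) * (1 / ((k:ℝ)+1) ^ 2)) := hsq1.mul_left _
  have hfsumm : Summable f := Summable.of_nonneg_of_le hfnonneg hfle hsum1
  -- split the sum
  rw [← Summable.sum_add_tsum_nat_add (m : ℕ) hfsumm]
  -- head part equals 1
  have hhead : (∑ i ∈ range (m : ℕ), f i) = 1 := by
    have : ∀ i ∈ range (m : ℕ), f i = 1 / (m:ℝ) := by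
      intro i hi
      rw [mem_range] at hi
      have hmax : max (m : ℕ) (i + 1) = (m : ℕ) := max_eq_left hi
      simp only [hf, hmax]
      rw [sq]
      field_simp
    rw [Finset.sum_congr rfl this, Finset.sum_const, card_range, nsmul_eq_mul]
    field_simp
  rw [hhead]
  -- tail part is < 1
  have htail : ∑' k : ℕ, f (k + (m : ℕ)) < 1 := by
    set g : ℕ → ℝ := fun k => (m:ℝ) * (1 / ((k:ℝ) + (m:ℝ)) - 1 / ((k:ℝ) + (m:ℝ) + 1)) with hg
    have hpos : ∀ k : ℕ, (0:ℝ) < (k:ℝ) + (m:ℝ) := fun k => by positivity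
    have hgval : ∀ k : ℕ, g k = (m:ℝ) / (((k:ℝ) + (m:ℝ)) * ((k:ℝ) + (m:ℝ) + 1)) := by
      intro k
      have h1 := hpos k
      have h2 : (0:ℝ) < (k:ℝ) + (m:ℝ) + 1 := by linarith
      rw [hg]
      field_simp
      ring
    have hgnonneg : ∀ k, 0 ≤ g k := by
      intro k
      rw [hgval k]
      have h1 := hpos k
      positivity
    -- g has sum 1
    have hgsum : HasSum g 1 := by
      rw [hasSum_iff_tendsto_nat_of_nonneg hgnonneg]
      have hts : ∀ n : ℕ, ∑ i ∈ range n, g i = (m:ℝ) * (1/(m:ℝ) - 1/((n:ℝ) + (m:ℝ))) := by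
        intro n
        have htel : ∑ i ∈ range n, (1 / ((i:ℝ) + (m:ℝ)) - 1 / (((i:ℝ)+1) + (m:ℝ)))
            = 1 / ((0:ℝ) + (m:ℝ)) - 1 / ((n:ℝ) + (m:ℝ)) := by
          have := Finset.sum_range_sub' (fun i : ℕ => 1 / ((i:ℝ) + (m:ℝ))) n
          simpa using this
        calc ∑ i ∈ range n, g i
            = (m:ℝ) * ∑ i ∈ range n, (1 / ((i:ℝ) + (m:ℝ)) - 1 / (((i:ℝ)+1) + (m:ℝ))) := by
              rw [Finset.mul_sum]
              apply Finset.sum_congr rfl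
              intro i _
              simp only [hg]
              ring_nf
          _ = (m:ℝ) * (1/(m:ℝ) - 1/((n:ℝ) + (m:ℝ))) := by rw [htel]; ring_nf
      have h1 : Tendsto (fun n : ℕ => 1/((n:ℝ) + (m:ℝ))) atTop (nhds 0) := by
        simp only [one_div]
        exact (tendsto_atTop_add_const_right atTop _ tendsto_natCast_atTop_atTop).inv_tendsto_atTop
      have hlim : Tendsto (fun n : ℕ => (m:ℝ) * (1/(m:ℝ) - 1/((n:ℝ) + (m:ℝ)))) atTop (nhds 1) := by
        have h3 := ((tendsto_const_nhds (x := 1/(m:ℝ))).sub h1).const_mul (m:ℝ)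
        simpa [mul_sub, sub_zero, mul_one_div, div_self hm.ne'] using h3
      exact hlim.congr fun n => (hts n).symm
    have hglt : ∀ k : ℕ, f (k + (m : ℕ)) < g k := by
      intro k
      have hmax : max (m : ℕ) (k + (m : ℕ) + 1) = k + (m : ℕ) + 1 := max_eq_right (by omega)
      have hcast : ((k + (m : ℕ) + 1 : ℕ) : ℝ) = (k:ℝ) + (m:ℝ) + 1 := by push_cast; ring
      have h1 := hpos k
      have h2 : (0:ℝ) < (k:ℝ) + (m:ℝ) + 1 := by linarith
      rw [hgval k]
      simp only [hf, hmax, hcast]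
      apply div_lt_div_of_pos_left hm (by positivity)
      nlinarith
    have hsumtail : Summable (fun k : ℕ => f (k + (m : ℕ))) := (summable_nat_add_iff _).2 hfsumm
    calc ∑' k : ℕ, f (k + (m : ℕ)) < ∑' k : ℕ, g k :=
          Summable.tsum_lt_tsum (fun k => (hglt k).le) (hglt 0) hsumtail hgsum.summable
      _ = 1 := hgsum.tsum_eq
  linarith
end

section
/- The constant √2 in the embedding inequality ‖f‖_{H²ᵢ} ≤ √2 ‖f‖_{𝓗²} is optimal: for every C with ‖f‖_{H²ᵢ} ≤ C‖f‖_{𝓗²} for all f ∈ 𝓗², one has C ≥ √2. Equivalently, the supremum over nonzero a ∈ ℓ² of (∑_{m,n} a_m conj(a_n) √(mn)/[max(m,n)]²) / (∑_n |a_n|²) equals 2. -/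
open Finset

lemma maxpos (m n : ℕ+) : (0:ℝ) < ((max (m:ℕ) (n:ℕ) : ℕ):ℝ)^2 := by
  have : 0 < max (m:ℕ) (n:ℕ) := lt_of_lt_of_le m.pos (le_max_left _ _)
  have : (0:ℝ) < ((max (m:ℕ) (n:ℕ) : ℕ):ℝ) := by exact_mod_cast this
  positivity

lemma summable_maxinv (m : ℕ+) : Summable (fun n : ℕ+ => (((max (m:ℕ) (n:ℕ) : ℕ):ℝ)^2)⁻¹) := by
  apply Summable.of_nonneg_of_le (fun n => le_of_lt (inv_pos.mpr (maxpos m n))) (fun n => ?_)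
    ((Real.summable_nat_pow_inv.mpr one_lt_two).subtype _)
  · apply inv_anti₀
    · have : (0:ℝ) < ((n:ℕ):ℝ) := by exact_mod_cast n.pos
      positivity
    · have h : ((n:ℕ):ℝ) ≤ ((max (m:ℕ) (n:ℕ) : ℕ):ℝ) := by exact_mod_cast le_max_right _ _
      have hn : (0:ℝ) ≤ ((n:ℕ):ℝ) := by positivity
      exact pow_le_pow_left₀ hn h 2

lemma tsum_maxinv_le (m : ℕ+) :
    ∑' n : ℕ+, (((max (m:ℕ) (n:ℕ) : ℕ):ℝ)^2)⁻¹ ≤ 2 / (m:ℝ) := by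
  apply Summable.tsum_le_of_sum_le (summable_maxinv m)
  intro s
  have hkey : ∀ t : Finset ℕ, 0 ∉ t → ∑ i ∈ t, (((max (m:ℕ) i : ℕ):ℝ)^2)⁻¹ ≤ 2 / (m:ℝ) := by
    intro t ht
    set N := max (t.sup id) (m:ℕ) with hN
    have hmN : (m:ℕ) ≤ N := le_max_right _ _
    have hsub : t ⊆ Finset.Icc 1 N := by
      intro i hi
      simp only [Finset.mem_Icc]
      refine ⟨?_, le_max_of_le_left (Finset.le_sup (f := id) hi)⟩
      rcases Nat.eq_zero_or_pos i with h | h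
      · exact absurd (h ▸ hi) ht
      · exact h
    have hnn : ∀ i : ℕ, (0:ℝ) ≤ (((max (m:ℕ) i : ℕ):ℝ)^2)⁻¹ := by
      intro i
      have : (0:ℕ) < max (m:ℕ) i := lt_of_lt_of_le m.pos (le_max_left _ _)
      have : (0:ℝ) < ((max (m:ℕ) i : ℕ):ℝ) := by exact_mod_cast this
      positivity
    have h1 : ∑ i ∈ t, (((max (m:ℕ) i : ℕ):ℝ)^2)⁻¹
        ≤ ∑ i ∈ Finset.Icc 1 N, (((max (m:ℕ) i : ℕ):ℝ)^2)⁻¹ :=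
      Finset.sum_le_sum_of_subset_of_nonneg hsub (fun i _ _ => hnn i)
    have hsplit : Finset.Icc 1 N = Finset.Icc 1 (m:ℕ) ∪ Finset.Ioc (m:ℕ) N := by
      ext i; simp only [Finset.mem_Icc, Finset.mem_union, Finset.mem_Ioc]; omega
    have hdisj : Disjoint (Finset.Icc 1 (m:ℕ)) (Finset.Ioc (m:ℕ) N) := by
      apply Finset.disjoint_left.mpr
      intro i hi hi'
      exact absurd (Finset.mem_Icc.mp hi).2 (not_le.mpr (Finset.mem_Ioc.mp hi').1)
    have e1 : ∑ i ∈ Finset.Icc 1 (m:ℕ), (((max (m:ℕ) i : ℕ):ℝ)^2)⁻¹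
        = ((m:ℕ):ℝ) * (((m:ℕ):ℝ)^2)⁻¹ := by
      rw [Finset.sum_congr rfl (g := fun _ => (((m:ℕ):ℝ)^2)⁻¹)
        (fun i hi => by rw [max_eq_left (Finset.mem_Icc.mp hi).2])]
      rw [Finset.sum_const, Nat.card_Icc]
      simp [mul_comm]
    have e2 : ∑ i ∈ Finset.Ioc (m:ℕ) N, (((max (m:ℕ) i : ℕ):ℝ)^2)⁻¹
        ≤ (((m:ℕ):ℝ))⁻¹ - ((N:ℝ))⁻¹ := by
      rw [Finset.sum_congr rfl (g := fun i => (((i:ℕ):ℝ)^2)⁻¹)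
        (fun i hi => by rw [max_eq_right (le_of_lt (Finset.mem_Ioc.mp hi).1)])]
      exact sum_Ioc_inv_sq_le_sub (by exact_mod_cast m.ne_zero) hmN
    have hNpos : (0:ℝ) < (N:ℝ) := by
      have : 0 < N := lt_of_lt_of_le m.pos hmN
      exact_mod_cast this
    have hm : (0:ℝ) < ((m:ℕ):ℝ) := by exact_mod_cast m.pos
    rw [hsplit, Finset.sum_union hdisj, e1] at h1
    have hfin : ((m:ℕ):ℝ) * (((m:ℕ):ℝ)^2)⁻¹ + ((((m:ℕ):ℝ))⁻¹ - ((N:ℝ))⁻¹) ≤ 2 / ((m:ℕ):ℝ) := by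
      rw [pow_two, mul_inv, ← mul_assoc, mul_inv_cancel₀ (ne_of_gt hm), one_mul, div_eq_mul_inv]
      have : (0:ℝ) ≤ ((N:ℝ))⁻¹ := inv_nonneg.mpr (le_of_lt hNpos)
      linarith
    linarith
  calc ∑ n ∈ s, (((max (m:ℕ) (n:ℕ) : ℕ):ℝ)^2)⁻¹
      = ∑ i ∈ s.image (fun n : ℕ+ => (n:ℕ)), (((max (m:ℕ) i : ℕ):ℝ)^2)⁻¹ :=
        (Finset.sum_image (g := fun n : ℕ+ => (n:ℕ)) (f := fun i : ℕ => (((max (m:ℕ) i : ℕ):ℝ)^2)⁻¹)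
          (fun x _ y _ h => PNat.coe_injective h)).symm
    _ ≤ 2 / (m:ℝ) := hkey _ (by
        intro h
        simp only [Finset.mem_image] at h
        obtain ⟨n, _, hn⟩ := h
        exact n.ne_zero hn)
open Finset ComplexConjugate
open scoped ENNReal NNReal

noncomputable def Kk (m n : ℕ+) : ℝ :=
  Real.sqrt ((m : ℝ) * (n : ℝ)) / ((max (m : ℕ) (n : ℕ) : ℕ) : ℝ) ^ 2

lemma Kk_nonneg (m n : ℕ+) : 0 ≤ Kk m n := by
  unfold Kk; positivity

-- pointwise AM-GM
lemma pointwise (m n : ℕ+) {x y : ℝ} (hx : 0 ≤ x) (hy : 0 ≤ y) :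
    x * y * Kk m n ≤ (x^2 * ((m:ℝ) * (((max (m:ℕ) (n:ℕ) : ℕ):ℝ)^2)⁻¹)
      + y^2 * ((n:ℝ) * (((max (m:ℕ) (n:ℕ) : ℕ):ℝ)^2)⁻¹)) / 2 := by
  have hM : (0:ℝ) < ((max (m:ℕ) (n:ℕ) : ℕ):ℝ)^2 := by
    have : 0 < max (m:ℕ) (n:ℕ) := lt_of_lt_of_le m.pos (le_max_left _ _)
    have : (0:ℝ) < ((max (m:ℕ) (n:ℕ) : ℕ):ℝ) := by exact_mod_cast this
    positivity
  have hK : Kk m n = Real.sqrt ((m:ℝ)*(n:ℝ)) * (((max (m:ℕ) (n:ℕ) : ℕ):ℝ)^2)⁻¹ := by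
    unfold Kk; rw [div_eq_mul_inv]
  have hs : Real.sqrt ((m:ℝ)*(n:ℝ)) = Real.sqrt (m:ℝ) * Real.sqrt (n:ℝ) :=
    Real.sqrt_mul (by positivity) _
  have h2 : 2 * (x * y * Real.sqrt ((m:ℝ)*(n:ℝ))) ≤ x^2 * (m:ℝ) + y^2 * (n:ℝ) := by
    rw [hs]
    nlinarith [sq_nonneg (x * Real.sqrt (m:ℝ) - y * Real.sqrt (n:ℝ)),
      Real.sq_sqrt (show (0:ℝ) ≤ (m:ℝ) by positivity),
      Real.sq_sqrt (show (0:ℝ) ≤ (n:ℝ) by positivity)]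
  rw [hK]
  have h3 := mul_le_mul_of_nonneg_right h2 (inv_nonneg.mpr (le_of_lt hM))
  nlinarith [h3]

noncomputable def hmax (m n : ℕ+) : ℝ := (((max (m:ℕ) (n:ℕ) : ℕ):ℝ)^2)⁻¹

lemma hmax_nonneg (m n : ℕ+) : 0 ≤ hmax m n := by unfold hmax; positivity

lemma summable_hmax (m : ℕ+) : Summable (fun n => hmax m n) := summable_maxinv m

lemma tsum_hmax_le (m : ℕ+) : ∑' n, hmax m n ≤ 2 / (m:ℝ) := tsum_maxinv_le m

lemma inner_bound (c : ℝ) (hc : 0 ≤ c) (m : ℕ+) :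
    ∑' n : ℕ+, ENNReal.ofReal (c * ((m:ℝ) * hmax m n)) ≤ ENNReal.ofReal (2 * c) := by
  have hm : (0:ℝ) < (m:ℝ) := by exact_mod_cast m.pos
  calc ∑' n : ℕ+, ENNReal.ofReal (c * ((m:ℝ) * hmax m n))
      = ∑' n : ℕ+, ENNReal.ofReal (c * (m:ℝ)) * ENNReal.ofReal (hmax m n) := by
        congr 1; funext n
        rw [← ENNReal.ofReal_mul (by positivity), mul_assoc]
    _ = ENNReal.ofReal (c * (m:ℝ)) * ∑' n : ℕ+, ENNReal.ofReal (hmax m n) :=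
        ENNReal.tsum_mul_left
    _ ≤ ENNReal.ofReal (c * (m:ℝ)) * ENNReal.ofReal (2 / (m:ℝ)) := by
        apply mul_le_mul_right
        rw [← ENNReal.ofReal_tsum_of_nonneg (fun n => hmax_nonneg m n) (summable_hmax m)]
        exact ENNReal.ofReal_le_ofReal (tsum_hmax_le m)
    _ = ENNReal.ofReal (2 * c) := by
        rw [← ENNReal.ofReal_mul (by positivity)]
        congr 1
        field_simp

lemma hmax_comm (m n : ℕ+) : hmax m n = hmax n m := by unfold hmax; rw [max_comm]

lemma tsum_enorm_le (a : ℕ+ → ℂ) (ha : Summable fun n => ‖a n‖^2) :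
    ∑' p : ℕ+ × ℕ+, ENNReal.ofReal (‖a p.1‖ * ‖a p.2‖ * Kk p.1 p.2)
      ≤ ENNReal.ofReal (2 * ∑' n, ‖a n‖^2) := by
  have hofReal_half : ∀ x y : ℝ, 0 ≤ x → 0 ≤ y →
      ENNReal.ofReal ((x + y) / 2) = 2⁻¹ * (ENNReal.ofReal x + ENNReal.ofReal y) := by
    intro x y hx hy
    rw [div_eq_inv_mul, ENNReal.ofReal_mul (by norm_num : (0:ℝ) ≤ 2⁻¹),
      ENNReal.ofReal_add hx hy, ENNReal.ofReal_inv_of_pos (by norm_num : (0:ℝ) < 2)]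
    norm_num
  have hpt : ∀ p : ℕ+ × ℕ+, ENNReal.ofReal (‖a p.1‖ * ‖a p.2‖ * Kk p.1 p.2)
      ≤ 2⁻¹ * (ENNReal.ofReal (‖a p.1‖^2 * ((p.1:ℝ) * hmax p.1 p.2))
        + ENNReal.ofReal (‖a p.2‖^2 * ((p.2:ℝ) * hmax p.1 p.2))) := by
    intro p
    have h := pointwise p.1 p.2 (norm_nonneg (a p.1)) (norm_nonneg (a p.2))
    have h1 : (0:ℝ) ≤ ‖a p.1‖^2 * ((p.1:ℝ) * hmax p.1 p.2) := by
      have := hmax_nonneg p.1 p.2; positivity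
    have h2 : (0:ℝ) ≤ ‖a p.2‖^2 * ((p.2:ℝ) * hmax p.1 p.2) := by
      have := hmax_nonneg p.1 p.2; positivity
    calc ENNReal.ofReal (‖a p.1‖ * ‖a p.2‖ * Kk p.1 p.2)
        ≤ ENNReal.ofReal ((‖a p.1‖^2 * ((p.1:ℝ) * hmax p.1 p.2)
            + ‖a p.2‖^2 * ((p.2:ℝ) * hmax p.1 p.2)) / 2) := ENNReal.ofReal_le_ofReal h
      _ = _ := hofReal_half _ _ h1 h2
  have hT1 : ∑' p : ℕ+ × ℕ+, ENNReal.ofReal (‖a p.1‖^2 * ((p.1:ℝ) * hmax p.1 p.2))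
      ≤ 2 * ENNReal.ofReal (∑' n, ‖a n‖^2) := by
    rw [ENNReal.tsum_prod']
    calc ∑' (m : ℕ+) (n : ℕ+), ENNReal.ofReal (‖a m‖^2 * ((m:ℝ) * hmax m n))
        ≤ ∑' m : ℕ+, ENNReal.ofReal (2 * ‖a m‖^2) :=
          ENNReal.tsum_le_tsum (fun m => inner_bound _ (sq_nonneg _) m)
      _ = 2 * ∑' m : ℕ+, ENNReal.ofReal (‖a m‖^2) := by
          simp_rw [ENNReal.ofReal_mul (by norm_num : (0:ℝ) ≤ 2)]
          rw [ENNReal.tsum_mul_left]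
          norm_num
      _ = 2 * ENNReal.ofReal (∑' n, ‖a n‖^2) := by
          rw [ENNReal.ofReal_tsum_of_nonneg (fun n => sq_nonneg _) ha]
  have hT2 : ∑' p : ℕ+ × ℕ+, ENNReal.ofReal (‖a p.2‖^2 * ((p.2:ℝ) * hmax p.1 p.2))
      ≤ 2 * ENNReal.ofReal (∑' n, ‖a n‖^2) := by
    rw [ENNReal.tsum_prod']
    rw [ENNReal.tsum_comm]
    calc ∑' (n : ℕ+) (m : ℕ+), ENNReal.ofReal (‖a n‖^2 * ((n:ℝ) * hmax m n))
        = ∑' (n : ℕ+) (m : ℕ+), ENNReal.ofReal (‖a n‖^2 * ((n:ℝ) * hmax n m)) := by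
          congr 1; funext n; congr 1; funext m; rw [hmax_comm]
      _ ≤ ∑' n : ℕ+, ENNReal.ofReal (2 * ‖a n‖^2) :=
          ENNReal.tsum_le_tsum (fun n => inner_bound _ (sq_nonneg _) n)
      _ = 2 * ∑' n : ℕ+, ENNReal.ofReal (‖a n‖^2) := by
          simp_rw [ENNReal.ofReal_mul (by norm_num : (0:ℝ) ≤ 2)]
          rw [ENNReal.tsum_mul_left]
          norm_num
      _ = 2 * ENNReal.ofReal (∑' n, ‖a n‖^2) := by
          rw [ENNReal.ofReal_tsum_of_nonneg (fun n => sq_nonneg _) ha]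
  calc ∑' p : ℕ+ × ℕ+, ENNReal.ofReal (‖a p.1‖ * ‖a p.2‖ * Kk p.1 p.2)
      ≤ ∑' p : ℕ+ × ℕ+, 2⁻¹ * (ENNReal.ofReal (‖a p.1‖^2 * ((p.1:ℝ) * hmax p.1 p.2))
        + ENNReal.ofReal (‖a p.2‖^2 * ((p.2:ℝ) * hmax p.1 p.2))) := ENNReal.tsum_le_tsum hpt
    _ = 2⁻¹ * ((∑' p : ℕ+ × ℕ+, ENNReal.ofReal (‖a p.1‖^2 * ((p.1:ℝ) * hmax p.1 p.2)))
        + ∑' p : ℕ+ × ℕ+, ENNReal.ofReal (‖a p.2‖^2 * ((p.2:ℝ) * hmax p.1 p.2))) := by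
        rw [ENNReal.tsum_mul_left, ENNReal.tsum_add]
    _ ≤ 2⁻¹ * (2 * ENNReal.ofReal (∑' n, ‖a n‖^2) + 2 * ENNReal.ofReal (∑' n, ‖a n‖^2)) := by
        gcongr
    _ = ENNReal.ofReal (2 * ∑' n, ‖a n‖^2) := by
        rw [← two_mul, ← mul_assoc, ENNReal.inv_mul_cancel (by norm_num) (by simp), one_mul,
          ENNReal.ofReal_mul (by norm_num : (0:ℝ) ≤ 2), ENNReal.ofReal_ofNat]

lemma norm_A (a : ℕ+ → ℂ) (p : ℕ+ × ℕ+) :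
    ‖a p.1 * (starRingEnd ℂ) (a p.2) * ((Kk p.1 p.2 : ℝ) : ℂ)‖
      = ‖a p.1‖ * ‖a p.2‖ * Kk p.1 p.2 := by
  rw [norm_mul, norm_mul, RCLike.norm_conj, Complex.norm_real, Real.norm_eq_abs,
    abs_of_nonneg (Kk_nonneg _ _)]

lemma summable_normA (a : ℕ+ → ℂ) (ha : Summable fun n => ‖a n‖^2) :
    Summable (fun p : ℕ+ × ℕ+ => ‖a p.1 * (starRingEnd ℂ) (a p.2) * ((Kk p.1 p.2 : ℝ) : ℂ)‖) := by
  have h := tsum_enorm_le a ha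
  have hne : ∑' p : ℕ+ × ℕ+, ENNReal.ofReal (‖a p.1‖ * ‖a p.2‖ * Kk p.1 p.2) ≠ ⊤ :=
    ne_top_of_le_ne_top ENNReal.ofReal_ne_top h
  have hcong : ∀ p : ℕ+ × ℕ+, ENNReal.ofReal (‖a p.1‖ * ‖a p.2‖ * Kk p.1 p.2)
      = ((‖a p.1 * (starRingEnd ℂ) (a p.2) * ((Kk p.1 p.2 : ℝ) : ℂ)‖₊ : ℝ≥0) : ℝ≥0∞) :=
    fun p => by rw [← norm_A a p]; exact ofReal_norm _
  rw [tsum_congr hcong] at hne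
  have hs := ENNReal.tsum_coe_ne_top_iff_summable.mp hne
  have := NNReal.summable_coe.mpr hs
  simpa [coe_nnnorm] using this

lemma summable_A (a : ℕ+ → ℂ) (ha : Summable fun n => ‖a n‖^2) :
    Summable (fun p : ℕ+ × ℕ+ => a p.1 * (starRingEnd ℂ) (a p.2) * ((Kk p.1 p.2 : ℝ) : ℂ)) :=
  (summable_normA a ha).of_norm

lemma normQ_le (a : ℕ+ → ℂ) (ha : Summable fun n => ‖a n‖^2) :
    ‖∑' m : ℕ+, ∑' n : ℕ+, a m * (starRingEnd ℂ) (a n) * ((Kk m n : ℝ) : ℂ)‖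
      ≤ 2 * ∑' n, ‖a n‖^2 := by
  have hA := summable_A a ha
  have hAn := summable_normA a ha
  have hprod : ∑' p : ℕ+ × ℕ+, (a p.1 * (starRingEnd ℂ) (a p.2) * ((Kk p.1 p.2 : ℝ) : ℂ))
      = ∑' m : ℕ+, ∑' n : ℕ+, a m * (starRingEnd ℂ) (a n) * ((Kk m n : ℝ) : ℂ) :=
    Summable.tsum_prod' hA hA.prod_factor
  rw [← hprod]
  refine le_trans (norm_tsum_le_tsum_norm hAn) ?_
  have h := tsum_enorm_le a ha
  have heq : ∑' p : ℕ+ × ℕ+, ENNReal.ofReal (‖a p.1‖ * ‖a p.2‖ * Kk p.1 p.2)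
      = ENNReal.ofReal (∑' p : ℕ+ × ℕ+, ‖a p.1 * (starRingEnd ℂ) (a p.2) * ((Kk p.1 p.2 : ℝ) : ℂ)‖) := by
    rw [ENNReal.ofReal_tsum_of_nonneg (fun p => norm_nonneg _) hAn]
    exact tsum_congr fun p => by rw [norm_A]
  rw [heq] at h
  have h2S : (0:ℝ) ≤ 2 * ∑' n, ‖a n‖^2 := by
    have := tsum_nonneg (L := SummationFilter.unconditional ℕ+) (fun n : ℕ+ => sq_nonneg ‖a n‖)
    linarith
  exact (ENNReal.ofReal_le_ofReal_iff h2S).mp h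

open Finset

noncomputable def Hh (N : ℕ) : ℝ := ∑ i ∈ range N, ((i:ℝ)+1)⁻¹
noncomputable def Cc (N : ℕ) : ℝ := ∑ i ∈ range N, (((i:ℝ)+1)^2)⁻¹
noncomputable def Tt (N : ℕ) : ℝ :=
  ∑ i ∈ range N, ∑ j ∈ range N, (((max (i+1) (j+1) : ℕ):ℝ)^2)⁻¹

lemma Tt_eq (N : ℕ) : Tt N = 2 * Hh N - Cc N := by
  induction N with
  | zero => simp [Tt, Hh, Cc]
  | succ N ih =>
    have hrow : ∀ i ∈ range N, ∑ j ∈ range (N+1), (((max (i+1) (j+1) : ℕ):ℝ)^2)⁻¹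
        = (∑ j ∈ range N, (((max (i+1) (j+1) : ℕ):ℝ)^2)⁻¹) + (((N:ℝ)+1)^2)⁻¹ := by
      intro i hi
      rw [Finset.sum_range_succ]
      congr 2
      rw [max_eq_right (by have := Finset.mem_range.mp hi; omega : i+1 ≤ N+1)]
      push_cast; ring
    have hlast : ∑ j ∈ range (N+1), (((max (N+1) (j+1) : ℕ):ℝ)^2)⁻¹
        = ((N:ℝ)+1) * (((N:ℝ)+1)^2)⁻¹ := by
      rw [Finset.sum_congr rfl (g := fun _ => (((N:ℝ)+1)^2)⁻¹) (fun j hj => by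
        rw [max_eq_left (by simp at hj; omega : j+1 ≤ N+1)]
        push_cast; ring_nf)]
      rw [Finset.sum_const, Finset.card_range]
      push_cast; ring
    have hT : Tt (N+1) = Tt N + ((N:ℝ)) * (((N:ℝ)+1)^2)⁻¹ + ((N:ℝ)+1) * (((N:ℝ)+1)^2)⁻¹ := by
      unfold Tt
      rw [Finset.sum_range_succ, hlast, Finset.sum_congr rfl hrow, Finset.sum_add_distrib,
        Finset.sum_const, Finset.card_range]
      push_cast; ring
    have hnz : ((N:ℝ)+1) ≠ 0 := by positivity
    rw [hT, ih]
    unfold Hh Cc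
    rw [Finset.sum_range_succ, Finset.sum_range_succ]
    field_simp
    ring
  
lemma Cc_le_two (N : ℕ) : Cc N ≤ 2 - (N:ℝ)⁻¹ := by
  induction N with
  | zero => simp [Cc]
  | succ N ih =>
    unfold Cc at *
    rw [Finset.sum_range_succ]
    push_cast
    rcases Nat.eq_zero_or_pos N with h | h
    · subst h; norm_num
    · have hN : (0:ℝ) < N := by exact_mod_cast h
      have key : (((N:ℝ)+1)^2)⁻¹ ≤ (N:ℝ)⁻¹ - ((N:ℝ)+1)⁻¹ := by
        have h1 : (N:ℝ)⁻¹ - ((N:ℝ)+1)⁻¹ = ((N:ℝ)*((N:ℝ)+1))⁻¹ := by field_simp; ring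
        rw [h1]
        apply inv_anti₀ (by positivity)
        nlinarith
      linarith

lemma Hh_pos {N : ℕ} (h : 1 ≤ N) : 0 < Hh N := by
  unfold Hh
  apply Finset.sum_pos (fun i _ => by positivity) (by simp; omega)

lemma Hh_tendsto : Filter.Tendsto Hh Filter.atTop Filter.atTop := by
  have h : Hh = fun n => ∑ i ∈ range n, 1 / ((i:ℝ) + 1) := by
    funext n; unfold Hh; exact Finset.sum_congr rfl (fun i _ => (one_div _).symm)
  rw [h]
  exact Real.tendsto_sum_range_one_div_nat_succ_atTop

noncomputable def aa (N : ℕ) : ℕ+ → ℂ :=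
  fun n => ((if (n:ℕ) ≤ N then (Real.sqrt ((n:ℕ):ℝ))⁻¹ else 0 : ℝ) : ℂ)

def sN (N : ℕ) : Finset ℕ+ := (range N).map ⟨Nat.succPNat, Nat.succPNat_injective⟩

lemma mem_sN {N : ℕ} {n : ℕ+} : n ∈ sN N ↔ (n:ℕ) ≤ N := by
  unfold sN
  simp only [Finset.mem_map, Finset.mem_range, Function.Embedding.coeFn_mk]
  constructor
  · rintro ⟨i, hi, rfl⟩
    simp [Nat.succPNat]
    omega
  · intro h
    refine ⟨(n:ℕ) - 1, by have := n.pos; omega, ?_⟩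
    have := n.pos
    apply PNat.coe_injective
    simp [Nat.succPNat]
    omega

lemma aa_zero {N : ℕ} {n : ℕ+} (h : ¬ (n:ℕ) ≤ N) : aa N n = 0 := by
  unfold aa; rw [if_neg h]; norm_num

lemma aa_succPNat {N : ℕ} {i : ℕ} (h : i < N) :
    aa N i.succPNat = ((Real.sqrt ((i:ℝ)+1))⁻¹ : ℝ) := by
  unfold aa
  rw [if_pos (by simp [Nat.succPNat]; omega)]
  norm_num [Nat.succPNat]

lemma summable_aa (N : ℕ) : Summable (fun n => ‖aa N n‖^2) :=
  summable_of_ne_finset_zero (s := sN N)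
    (fun n hn => by rw [aa_zero (fun h => hn (mem_sN.mpr h))]; simp)

lemma tsum_aa (N : ℕ) : ∑' n, ‖aa N n‖^2 = Hh N := by
  rw [tsum_eq_sum (s := sN N)
    (fun n hn => by rw [aa_zero (fun h => hn (mem_sN.mpr h))]; simp)]
  unfold sN
  rw [Finset.sum_map]
  unfold Hh
  apply Finset.sum_congr rfl
  intro i hi
  simp only [Function.Embedding.coeFn_mk]
  rw [aa_succPNat (Finset.mem_range.mp hi)]
  rw [Complex.norm_real, Real.norm_eq_abs, abs_of_nonneg (by positivity), inv_pow,
    Real.sq_sqrt (by positivity)]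

lemma Q_aa (N : ℕ) :
    (∑' m : ℕ+, ∑' n : ℕ+, aa N m * (starRingEnd ℂ) (aa N n) * ((Kk m n : ℝ) : ℂ))
      = ((Tt N : ℝ) : ℂ) := by
  have hin : ∀ m : ℕ+, ∑' n : ℕ+, aa N m * (starRingEnd ℂ) (aa N n) * ((Kk m n : ℝ) : ℂ)
      = ∑ n ∈ sN N, aa N m * (starRingEnd ℂ) (aa N n) * ((Kk m n : ℝ) : ℂ) := by
    intro m
    apply tsum_eq_sum
    intro n hn
    rw [aa_zero (fun h => hn (mem_sN.mpr h))]
    simp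
  rw [tsum_congr hin]
  rw [tsum_eq_sum (s := sN N) (fun m hm => by
    rw [aa_zero (fun h => hm (mem_sN.mpr h))]
    exact Finset.sum_eq_zero (fun n _ => by simp))]
  have hterm : ∀ m ∈ sN N, ∀ n ∈ sN N,
      aa N m * (starRingEnd ℂ) (aa N n) * ((Kk m n : ℝ) : ℂ)
        = (((((max (m:ℕ) (n:ℕ) : ℕ):ℝ)^2)⁻¹ : ℝ) : ℂ) := by
    intro m hm n hn
    rw [mem_sN] at hm hn
    unfold aa
    rw [if_pos hm, if_pos hn, Complex.conj_ofReal, ← Complex.ofReal_mul, ← Complex.ofReal_mul]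
    congr 1
    unfold Kk
    have hm1 : (0:ℝ) < Real.sqrt ((m:ℕ):ℝ) := Real.sqrt_pos.mpr (by exact_mod_cast m.pos)
    have hn1 : (0:ℝ) < Real.sqrt ((n:ℕ):ℝ) := Real.sqrt_pos.mpr (by exact_mod_cast n.pos)
    have hM : (0:ℝ) < ((max (m:ℕ) (n:ℕ) : ℕ):ℝ) := by
      have : 0 < max (m:ℕ) (n:ℕ) := lt_of_lt_of_le m.pos (le_max_left _ _)
      exact_mod_cast this
    rw [Real.sqrt_mul (by positivity)]
    field_simp
  rw [Finset.sum_congr rfl (fun m hm => Finset.sum_congr rfl (fun n hn => hterm m hm n hn))]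
  have : ∀ m ∈ sN N, ∑ n ∈ sN N, (((((max (m:ℕ) (n:ℕ) : ℕ):ℝ)^2)⁻¹ : ℝ) : ℂ)
      = (((∑ n ∈ sN N, ((((max (m:ℕ) (n:ℕ) : ℕ):ℝ)^2)⁻¹ : ℝ)) : ℝ) : ℂ) := by
    intro m _
    rw [Complex.ofReal_sum]
  rw [Finset.sum_congr rfl this, ← Complex.ofReal_sum]
  congr 1
  unfold Tt sN
  rw [Finset.sum_map]
  apply Finset.sum_congr rfl
  intro i hi
  rw [Finset.sum_map]
  apply Finset.sum_congr rfl
  intro j hj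
  simp [Nat.succPNat]

lemma aa_ne_zero {N : ℕ} (h : 1 ≤ N) : aa N ≠ 0 := by
  intro hz
  have h1 := congrFun hz 1
  unfold aa at h1
  rw [if_pos (by simpa using h)] at h1
  simp at h1

lemma Tt_nonneg (N : ℕ) : 0 ≤ Tt N :=
  Finset.sum_nonneg fun i _ => Finset.sum_nonneg fun j _ => by positivity

lemma exists_N (M : ℝ) : ∃ N : ℕ, 1 ≤ N ∧ M < Hh N := by
  have h := Hh_tendsto.eventually_gt_atTop M
  rcases (h.and (Filter.eventually_ge_atTop 1)).exists with ⟨N, h1, h2⟩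
  exact ⟨N, h2, h1⟩

lemma normQ_aa (N : ℕ) :
    ‖∑' m : ℕ+, ∑' n : ℕ+, aa N m * (starRingEnd ℂ) (aa N n) * ((Kk m n : ℝ) : ℂ)‖ = Tt N := by
  rw [Q_aa N, Complex.norm_real, Real.norm_eq_abs, abs_of_nonneg (Tt_nonneg N)]

theorem stmt8 :
    (∀ C : ℝ, 0 ≤ C →
      (∀ a : ℕ+ → ℂ, Summable (fun n => ‖a n‖ ^ 2) →
        ‖∑' m : ℕ+, ∑' n : ℕ+, a m * (starRingEnd ℂ) (a n) *
            ((Real.sqrt ((m : ℝ) * (n : ℝ)) / ((max (m : ℕ) (n : ℕ) : ℕ) : ℝ) ^ 2 : ℝ) : ℂ)‖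
          ≤ C ^ 2 * ∑' n : ℕ+, ‖a n‖ ^ 2) →
      Real.sqrt 2 ≤ C) ∧
    sSup {r : ℝ | ∃ a : ℕ+ → ℂ, Summable (fun n => ‖a n‖ ^ 2) ∧ a ≠ 0 ∧
        r = ‖∑' m : ℕ+, ∑' n : ℕ+, a m * (starRingEnd ℂ) (a n) *
            ((Real.sqrt ((m : ℝ) * (n : ℝ)) / ((max (m : ℕ) (n : ℕ) : ℕ) : ℝ) ^ 2 : ℝ) : ℂ)‖
          / ∑' n : ℕ+, ‖a n‖ ^ 2} = 2 := by
  constructor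
  · intro C hC hbound
    have h2 : 2 ≤ C^2 := by
      by_contra hlt
      push_neg at hlt
      obtain ⟨N, hN1, hNH⟩ := exists_N (2 / (2 - C^2))
      have hH := Hh_pos hN1
      have hb : ‖∑' m : ℕ+, ∑' n : ℕ+, aa N m * (starRingEnd ℂ) (aa N n) * ((Kk m n : ℝ) : ℂ)‖
          ≤ C ^ 2 * ∑' n : ℕ+, ‖aa N n‖ ^ 2 := hbound (aa N) (summable_aa N)
      rw [normQ_aa N, tsum_aa N, Tt_eq N] at hb
      have hCc : Cc N ≤ 2 := by
        have := Cc_le_two N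
        have hNn : (0:ℝ) ≤ ((N:ℕ):ℝ)⁻¹ := by positivity
        linarith
      have h2C : (0:ℝ) < 2 - C^2 := by linarith
      have hlt2 : 2 < Hh N * (2 - C^2) := (div_lt_iff₀ h2C).mp hNH
      nlinarith
    calc Real.sqrt 2 ≤ Real.sqrt (C^2) := Real.sqrt_le_sqrt h2
      _ = C := Real.sqrt_sq hC
  · set S := {r : ℝ | ∃ a : ℕ+ → ℂ, Summable (fun n => ‖a n‖ ^ 2) ∧ a ≠ 0 ∧
        r = ‖∑' m : ℕ+, ∑' n : ℕ+, a m * (starRingEnd ℂ) (a n) *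
            ((Real.sqrt ((m : ℝ) * (n : ℝ)) / ((max (m : ℕ) (n : ℕ) : ℕ) : ℝ) ^ 2 : ℝ) : ℂ)‖
          / ∑' n : ℕ+, ‖a n‖ ^ 2} with hS
    have hmem : ∀ N : ℕ, 1 ≤ N → (Tt N / Hh N) ∈ S := by
      intro N hN1
      refine ⟨aa N, summable_aa N, aa_ne_zero hN1, ?_⟩
      show Tt N / Hh N
          = ‖∑' m : ℕ+, ∑' n : ℕ+, aa N m * (starRingEnd ℂ) (aa N n) * ((Kk m n : ℝ) : ℂ)‖
            / ∑' n : ℕ+, ‖aa N n‖ ^ 2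
      rw [normQ_aa N, tsum_aa N]
    have hub : ∀ r ∈ S, r ≤ 2 := by
      rintro r ⟨a, ha, hne, rfl⟩
      obtain ⟨n0, hn0⟩ : ∃ n0, a n0 ≠ 0 := by
        by_contra h; push_neg at h; exact hne (funext h)
      have hpos : 0 < ∑' n : ℕ+, ‖a n‖^2 := by
        have hle : ‖a n0‖^2 ≤ ∑' n, ‖a n‖^2 := Summable.le_tsum ha n0 (fun n _ => sq_nonneg _)
        have h0 : 0 < ‖a n0‖^2 := by
          have := norm_pos_iff.mpr hn0
          positivity
        linarith
      rw [div_le_iff₀ hpos]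
      calc ‖∑' m : ℕ+, ∑' n : ℕ+, a m * (starRingEnd ℂ) (a n) *
            ((Real.sqrt ((m : ℝ) * (n : ℝ)) / ((max (m : ℕ) (n : ℕ) : ℕ) : ℝ) ^ 2 : ℝ) : ℂ)‖
          = ‖∑' m : ℕ+, ∑' n : ℕ+, a m * (starRingEnd ℂ) (a n) * ((Kk m n : ℝ) : ℂ)‖ := rfl
        _ ≤ 2 * ∑' n : ℕ+, ‖a n‖^2 := normQ_le a ha
    have hbdd : BddAbove S := ⟨2, hub⟩
    apply le_antisymm
    · exact csSup_le ⟨_, hmem 1 le_rfl⟩ hub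
    · apply le_of_forall_lt
      intro c hc
      obtain ⟨N, hN1, hNH⟩ := exists_N (2 / (2 - c))
      have hH := Hh_pos hN1
      have h2c : (0:ℝ) < 2 - c := by linarith
      have hlt2 : 2 < Hh N * (2 - c) := (div_lt_iff₀ h2c).mp hNH
      have hCc : Cc N ≤ 2 := by
        have := Cc_le_two N
        have hNn : (0:ℝ) ≤ ((N:ℕ):ℝ)⁻¹ := by positivity
        linarith
      have hcr : c < Tt N / Hh N := by
        rw [lt_div_iff₀ hH, Tt_eq N]
        nlinarith
      exact lt_of_lt_of_le hcr (le_csSup hbdd (hmem N hN1))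
end

section
/- For every ε > 0, with a_n = n^{-1/2-ε}, one has ∑_{m=1}^∞ ∑_{n=1}^∞ a_m a_n √(mn)/[max(m,n)]² = ∑_{m=1}^∞ m^{-ε}( (1/m²)∑_{n=1}^m n^{-ε} + ∑_{n=m+1}^∞ n^{-2-ε} ) > (ζ(1+2ε) − ζ(2+ε))/(1−ε) + (ζ(1+2ε) − 1)/(1+ε), where ζ is the Riemann zeta function (assume ε < 1 for the first fraction). -/
open Real Finset Filter

/-! ### Auxiliary lemmas -/

private lemma rpow_neg_two_eq (x : ℝ) (hx : 0 ≤ x) : x ^ (-2:ℝ) = (x^2)⁻¹ := by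
  rw [show (-2:ℝ) = -((2:ℕ):ℝ) by norm_num, Real.rpow_neg hx, Real.rpow_natCast]

private lemma summable_pnat_rpow {s : ℝ} (hs : 1 < s) :
    Summable (fun n : ℕ+ => (n:ℝ) ^ (-s)) := by
  have h : Summable (fun n : ℕ => (n:ℝ) ^ (-s)) := Real.summable_nat_rpow.2 (by linarith)
  exact h.comp_injective PNat.coe_injective

private lemma summable_shift' {s : ℝ} (hs : 1 < s) :
    Summable (fun k : ℕ => ((k:ℝ)+1) ^ (-s)) := by
  have h : Summable (fun n : ℕ => (n:ℝ) ^ (-s)) := Real.summable_nat_rpow.2 (by linarith)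
  have := (summable_nat_add_iff 1).2 h
  simpa [Nat.cast_add] using this

private lemma term_eq (ε : ℝ) (m n : ℕ+) :
    (m : ℝ) ^ (-(1/2:ℝ) - ε) * (n : ℝ) ^ (-(1/2:ℝ) - ε) *
      (Real.sqrt ((m:ℝ)*(n:ℝ)) / ((max (m:ℕ) (n:ℕ) : ℕ):ℝ)^2)
    = (m:ℝ)^(-ε) * ((n:ℝ)^(-ε) / ((max (m:ℕ) (n:ℕ) : ℕ):ℝ)^2) := by
  have hm : (0:ℝ) < (m:ℝ) := by exact_mod_cast m.pos
  have hn : (0:ℝ) < (n:ℝ) := by exact_mod_cast n.pos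
  rw [Real.sqrt_eq_rpow, Real.mul_rpow hm.le hn.le]
  rw [show (m : ℝ) ^ (-(1/2:ℝ) - ε) * (n : ℝ) ^ (-(1/2:ℝ) - ε) *
      ((m:ℝ)^(1/2:ℝ) * (n:ℝ)^(1/2:ℝ) / ((max (m:ℕ) (n:ℕ) : ℕ):ℝ)^2)
      = ((m : ℝ) ^ (-(1/2:ℝ) - ε) * (m:ℝ)^(1/2:ℝ)) * (((n : ℝ) ^ (-(1/2:ℝ) - ε) * (n:ℝ)^(1/2:ℝ))
        / ((max (m:ℕ) (n:ℕ) : ℕ):ℝ)^2) by ring]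
  rw [← Real.rpow_add hm, ← Real.rpow_add hn]
  ring_nf

private lemma summable_G (ε : ℝ) (hε : 0 < ε) (m : ℕ+) :
    Summable (fun k : ℕ => ((k+1:ℕ):ℝ)^(-ε) / ((max (m:ℕ) (k+1) : ℕ):ℝ)^2) := by
  have h2 : Summable (fun k : ℕ => (((k+1:ℕ)):ℝ) ^ (-(2:ℝ))) := by
    have h : Summable (fun n : ℕ => (n:ℝ) ^ (-(2:ℝ))) := Real.summable_nat_rpow.2 (by norm_num)
    exact (summable_nat_add_iff 1).2 h
  refine Summable.of_nonneg_of_le (fun k => ?_) (fun k => ?_) h2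
  · positivity
  · have hk1 : (0:ℝ) < ((k+1:ℕ):ℝ) := by positivity
    have hmax : ((k+1:ℕ):ℝ) ≤ ((max (m:ℕ) (k+1) : ℕ):ℝ) := by
      exact_mod_cast Nat.le_max_right (m:ℕ) (k+1)
    rw [rpow_neg_two_eq _ hk1.le]
    have h1 : ((k+1:ℕ):ℝ)^(-ε) ≤ 1 :=
      Real.rpow_le_one_of_one_le_of_nonpos
        (by exact_mod_cast Nat.succ_le_succ (Nat.zero_le k)) (by linarith)
    calc ((k+1:ℕ):ℝ)^(-ε) / ((max (m:ℕ) (k+1) : ℕ):ℝ)^2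
        ≤ 1 / ((k+1:ℕ):ℝ)^2 :=
          div_le_div₀ zero_le_one h1 (by positivity) (pow_le_pow_left₀ hk1.le hmax 2)
      _ = (((k+1:ℕ):ℝ)^2)⁻¹ := one_div _

private lemma inner_eq (ε : ℝ) (hε : 0 < ε) (m : ℕ+) :
    ∑' n : ℕ+, ((m : ℝ) ^ (-(1/2:ℝ) - ε) * (n : ℝ) ^ (-(1/2:ℝ) - ε) *
        (Real.sqrt ((m:ℝ)*(n:ℝ)) / ((max (m:ℕ) (n:ℕ) : ℕ):ℝ)^2))
      = (m:ℝ)^(-ε) * ((1/(m:ℝ)^2) * ∑ n ∈ Finset.Icc 1 (m:ℕ), (n:ℝ)^(-ε)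
          + ∑' n : ℕ, ((m:ℝ)+1+(n:ℝ))^(-2-ε)) := by
  have hm : (0:ℝ) < (m:ℝ) := by exact_mod_cast m.pos
  rw [tsum_congr (fun n => term_eq ε m n), tsum_mul_left]
  congr 1
  have e := (Equiv.pnatEquivNat.symm.tsum_eq
    (fun n : ℕ+ => (n:ℝ)^(-ε) / ((max (m:ℕ) (n:ℕ) : ℕ):ℝ)^2)).symm
  rw [e]
  have hfun : (fun k : ℕ => ((Equiv.pnatEquivNat.symm k : ℕ+):ℝ)^(-ε) /
      ((max (m:ℕ) ((Equiv.pnatEquivNat.symm k : ℕ+):ℕ) : ℕ):ℝ)^2)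
      = fun k : ℕ => ((k+1:ℕ):ℝ)^(-ε) / ((max (m:ℕ) (k+1) : ℕ):ℝ)^2 := rfl
  rw [hfun, ← (summable_G ε hε m).sum_add_tsum_nat_add (m:ℕ)]
  congr 1
  · have hcong : ∀ i ∈ Finset.range (m:ℕ), ((i+1:ℕ):ℝ)^(-ε) / ((max (m:ℕ) (i+1) : ℕ):ℝ)^2
        = (1/(m:ℝ)^2) * ((i+1:ℕ):ℝ)^(-ε) := by
      intro i hi
      rw [Finset.mem_range] at hi
      rw [max_eq_left hi]
      have hc : ((m:ℕ):ℝ) = (m:ℝ) := rfl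
      rw [hc]; ring
    rw [Finset.sum_congr rfl hcong, ← Finset.mul_sum]
    congr 1
    rw [← Finset.Ico_add_one_right_eq_Icc, Finset.sum_Ico_eq_sum_range]
    simp [add_comm]
  · apply tsum_congr
    intro k
    have hmax : max (m:ℕ) (k + (m:ℕ) + 1) = k + (m:ℕ) + 1 := max_eq_right (by omega)
    rw [hmax]
    rw [show (-2-ε : ℝ) = -ε + (-2) by ring,
      Real.rpow_add (by linarith : (0:ℝ) < (m:ℝ)+1+(k:ℝ)),
      rpow_neg_two_eq _ (by linarith : (0:ℝ) ≤ (m:ℝ)+1+(k:ℝ))]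
    rw [div_eq_mul_inv]
    push_cast
    ring_nf

private lemma bern_upper {x p : ℝ} (hx : 0 < x) (hp0 : 0 ≤ p) (hp1 : p ≤ 1) :
    (x+1)^p ≤ x^p + p * x^(p-1) := by
  have hs : (0:ℝ) ≤ 1/x := by positivity
  have h2 : (1 + 1/x)^p ≤ 1 + p * (1/x) :=
    rpow_one_add_le_one_add_mul_self (by linarith) hp0 hp1
  have h1 : x + 1 = x * (1 + 1/x) := by field_simp
  have h3 : (x+1)^p = x^p * (1+1/x)^p := by
    rw [h1, Real.mul_rpow hx.le (by linarith)]
  have h4 : x^p * (1 + p * (1/x)) = x^p + p * x^(p-1) := by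
    have hh : x^(p-1) = x^p * x⁻¹ := by
      rw [show p - 1 = p + (-1) by ring, Real.rpow_add hx, Real.rpow_neg_one]
    rw [hh]; field_simp
  calc (x+1)^p = x^p * (1+1/x)^p := h3
    _ ≤ x^p * (1 + p * (1/x)) :=
        mul_le_mul_of_nonneg_left h2 (Real.rpow_nonneg hx.le p)
    _ = x^p + p * x^(p-1) := h4

private lemma bern_lower {x q : ℝ} (hx : 1 ≤ x) (hq : 1 ≤ q) :
    x^(-q) - (x+1)^(-q) ≤ q * x^(-q-1) := by
  have hx0 : (0:ℝ) < x := by linarith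
  have hx1 : (0:ℝ) < x + 1 := by linarith
  have hs : -1 ≤ -(1/(x+1)) := by
    rw [neg_le_neg_iff, div_le_one hx1]; linarith
  have hb : 1 + q * (-(1/(x+1))) ≤ (1 + -(1/(x+1)))^q :=
    one_add_mul_self_le_rpow_one_add hs hq
  have he : 1 + -(1/(x+1)) = x/(x+1) := by field_simp; ring
  rw [he] at hb
  have hxq : (x/(x+1))^q = x^q * (x+1)^(-q) := by
    rw [div_eq_mul_inv, Real.mul_rpow hx0.le (by positivity),
      Real.inv_rpow hx1.le, ← Real.rpow_neg hx1.le]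
  have hcanc : x^(-q) * (x^q * (x+1)^(-q)) = (x+1)^(-q) := by
    rw [← mul_assoc, ← Real.rpow_add hx0]; simp
  have hnn : (0:ℝ) ≤ x^(-q) := Real.rpow_nonneg hx0.le _
  have step1 : x^(-q) - (x+1)^(-q) ≤ x^(-q) * (q/(x+1)) := by
    have h5 : x^(-q) * (1 - x^q * (x+1)^(-q)) ≤ x^(-q) * (1 - (1 + q * (-(1/(x+1))))) := by
      apply mul_le_mul_of_nonneg_left _ hnn
      rw [hxq] at hb; linarith
    calc x^(-q) - (x+1)^(-q) = x^(-q) * (1 - x^q * (x+1)^(-q)) := by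
          rw [mul_sub, mul_one, hcanc]
      _ ≤ x^(-q) * (1 - (1 + q * (-(1/(x+1))))) := h5
      _ = x^(-q) * (q/(x+1)) := by ring
  have step2 : x^(-q) * (q/(x+1)) ≤ x^(-q) * (q/x) := by
    apply mul_le_mul_of_nonneg_left _ hnn
    apply div_le_div_of_nonneg_left (by linarith) hx0 (by linarith)
  have step3 : x^(-q) * (q/x) = q * x^(-q-1) := by
    have hh : x^(-q-1) = x^(-q) * x⁻¹ := by
      rw [show -q - 1 = -q + (-1) by ring, Real.rpow_add hx0, Real.rpow_neg_one]
    rw [hh]; field_simp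
  linarith

private lemma sum_lb (ε : ℝ) (hε : 0 < ε) (hε1 : ε < 1) (M : ℕ) :
    (((M:ℝ)+1)^(1-ε) - 1)/(1-ε) ≤ ∑ n ∈ Finset.Icc 1 M, (n:ℝ)^(-ε) := by
  have h1e : (0:ℝ) < 1 - ε := by linarith
  induction M with
  | zero => simp
  | succ M ih =>
    rw [Finset.sum_Icc_succ_top (Nat.succ_le_succ (Nat.zero_le M))]
    have hx : (0:ℝ) < (M:ℝ)+1 := by positivity
    have hb := bern_upper hx (by linarith : (0:ℝ) ≤ 1-ε) (by linarith)
    rw [show (1-ε) - 1 = -ε by ring] at hb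
    have key : (((M+1:ℕ):ℝ)+1)^(1-ε) - 1 ≤ (((M:ℝ)+1)^(1-ε) - 1) + (1-ε) * ((M:ℝ)+1)^(-ε) := by
      push_cast; linarith
    have hdiv : ((((M+1:ℕ):ℝ)+1)^(1-ε) - 1)/(1-ε)
        ≤ ((((M:ℝ)+1)^(1-ε) - 1) + (1-ε) * ((M:ℝ)+1)^(-ε))/(1-ε) := by gcongr
    have hsplit : ((((M:ℝ)+1)^(1-ε) - 1) + (1-ε) * ((M:ℝ)+1)^(-ε))/(1-ε)
        = (((M:ℝ)+1)^(1-ε) - 1)/(1-ε) + ((M:ℝ)+1)^(-ε) := by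
      field_simp
    have hcast : ((M+1:ℕ):ℝ)^(-ε) = ((M:ℝ)+1)^(-ε) := by push_cast; rfl
    rw [hcast]
    linarith [hdiv, hsplit ▸ hdiv]

private lemma summable_tail (ε : ℝ) (hε : 0 < ε) (c : ℝ) (hc : 1 ≤ c) :
    Summable (fun k : ℕ => (c + (k:ℝ)) ^ (-2-ε)) := by
  have hb := summable_shift' (s := 2+ε) (by linarith)
  refine Summable.of_nonneg_of_le (fun k => ?_) (fun k => ?_) hb
  · apply Real.rpow_nonneg; positivity
  · rw [show -(2+ε) = -2-ε by ring] at hb ⊢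
    exact Real.rpow_le_rpow_of_nonpos (by positivity) (by linarith) (by linarith)

private lemma tail_lb (ε : ℝ) (hε : 0 < ε) (c : ℝ) (hc : 1 ≤ c) :
    c^(-(1+ε))/(1+ε) ≤ ∑' n : ℕ, (c + (n:ℝ))^(-2-ε) := by
  set u : ℕ → ℝ := fun k => (c + (k:ℝ))^(-(1+ε)) with hu
  have hcpos : (0:ℝ) < c := by linarith
  have hanti : ∀ k : ℕ, 0 ≤ u k - u (k+1) := by
    intro k
    have : u (k+1) ≤ u k := by
      apply Real.rpow_le_rpow_of_nonpos (by positivity) (by push_cast; linarith) (by linarith)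
    linarith
  have hu0 : Tendsto u atTop (nhds 0) := by
    have h1 : Tendsto (fun k : ℕ => c + (k:ℝ)) atTop atTop :=
      tendsto_atTop_add_const_left _ c tendsto_natCast_atTop_atTop
    exact (tendsto_rpow_neg_atTop (by linarith : (0:ℝ) < 1+ε)).comp h1
  have hts : HasSum (fun k => u k - u (k+1)) (u 0) := by
    rw [hasSum_iff_tendsto_nat_of_nonneg hanti]
    have hps : ∀ n, ∑ i ∈ Finset.range n, (u i - u (i+1)) = u 0 - u n :=
      fun n => Finset.sum_range_sub' u n
    simp_rw [hps]
    simpa using tendsto_const_nhds.sub hu0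
  have hle : ∀ k : ℕ, u k - u (k+1) ≤ (1+ε) * (c + (k:ℝ))^(-2-ε) := by
    intro k
    have hx : 1 ≤ c + (k:ℝ) := by
      have : (0:ℝ) ≤ (k:ℝ) := Nat.cast_nonneg k; linarith
    have hb := bern_lower hx (by linarith : (1:ℝ) ≤ 1+ε)
    rw [show -(1+ε) - 1 = -2-ε by ring] at hb
    show u k - u (k+1) ≤ _
    have hcast : u (k+1) = ((c + (k:ℝ)) + 1)^(-(1+ε)) := by
      simp only [hu]; push_cast; ring_nf
    rw [hcast]
    exact hb
  have hsum2 : Summable (fun k : ℕ => (1+ε) * (c + (k:ℝ))^(-2-ε)) :=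
    (summable_tail ε hε c hc).mul_left _
  have hmain : u 0 ≤ (1+ε) * ∑' n : ℕ, (c + (n:ℝ))^(-2-ε) := by
    rw [← hts.tsum_eq, ← tsum_mul_left]
    exact Summable.tsum_le_tsum hle hts.summable hsum2
  have hu00 : u 0 = c^(-(1+ε)) := by simp [hu]
  rw [div_le_iff₀ (by linarith : (0:ℝ) < 1+ε)]
  rw [hu00] at hmain
  linarith [hmain]

noncomputable def zetaR (s : ℝ) : ℝ := ∑' n : ℕ+, (n : ℝ) ^ (-s)

private lemma zeta_shift {s : ℝ} (hs : 1 < s) :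
    ∑' m : ℕ+, ((m:ℝ)+1)^(-s) = zetaR s - 1 := by
  have hf : Summable (fun k : ℕ => ((k:ℝ)+1)^(-s)) := summable_shift' hs
  have h1 : zetaR s = ∑' k : ℕ, ((k:ℝ)+1)^(-s) := by
    rw [zetaR, ← Equiv.pnatEquivNat.symm.tsum_eq (fun n : ℕ+ => (n:ℝ)^(-s))]
    apply tsum_congr
    intro k
    have : ((Equiv.pnatEquivNat.symm k : ℕ+):ℝ) = (k:ℝ)+1 := by
      have : ((Equiv.pnatEquivNat.symm k : ℕ+):ℕ) = k+1 := rfl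
      rw [show ((Equiv.pnatEquivNat.symm k : ℕ+):ℝ) = (((Equiv.pnatEquivNat.symm k : ℕ+):ℕ):ℝ) from rfl,
        this]; push_cast; ring
    rw [this]
  have h2 : ∑' m : ℕ+, ((m:ℝ)+1)^(-s) = ∑' k : ℕ, (((k:ℝ)+1)+1)^(-s) := by
    rw [← Equiv.pnatEquivNat.symm.tsum_eq (fun n : ℕ+ => ((n:ℝ)+1)^(-s))]
    apply tsum_congr
    intro k
    have : ((Equiv.pnatEquivNat.symm k : ℕ+):ℝ) = (k:ℝ)+1 := by
      have h : ((Equiv.pnatEquivNat.symm k : ℕ+):ℕ) = k+1 := rfl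
      rw [show ((Equiv.pnatEquivNat.symm k : ℕ+):ℝ) = (((Equiv.pnatEquivNat.symm k : ℕ+):ℕ):ℝ) from rfl,
        h]; push_cast; ring
    rw [this]
  have h3 := Summable.sum_add_tsum_nat_add (f := fun k : ℕ => ((k:ℝ)+1)^(-s)) 1 hf
  rw [h1, ← h3]
  have h4 : ∑ i ∈ Finset.range 1, (((i:ℕ):ℝ)+1)^(-s) = 1 := by
    simp [Real.one_rpow]
  have h5 : ∑' k : ℕ, (((k+1:ℕ):ℝ)+1)^(-s) = ∑' k : ℕ, (((k:ℝ)+1)+1)^(-s) := by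
    apply tsum_congr; intro k; push_cast; ring_nf
  rw [h2, ← h5, Finset.sum_range_one]
  norm_num [Real.one_rpow]

private noncomputable def gg (ε : ℝ) (m : ℕ+) : ℝ :=
  (m : ℝ) ^ (-ε) * ((1 / (m : ℝ) ^ 2) * ∑ n ∈ Finset.Icc 1 (m : ℕ), (n : ℝ) ^ (-ε)
    + ∑' n : ℕ, ((m : ℝ) + 1 + (n : ℝ)) ^ (-2 - ε))

private noncomputable def hh (ε : ℝ) (m : ℕ+) : ℝ :=
  ((m:ℝ)^(-(1+2*ε)) - (m:ℝ)^(-(2+ε)))/(1-ε) + ((m:ℝ)+1)^(-(1+2*ε))/(1+ε)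

private lemma x_pos (m : ℕ+) : (0:ℝ) < (m:ℝ) := by exact_mod_cast m.pos

private lemma x_one_le (m : ℕ+) : (1:ℝ) ≤ (m:ℝ) := by exact_mod_cast m.one_le

private lemma hh_le_gg (ε : ℝ) (hε : 0 < ε) (hε1 : ε < 1) (m : ℕ+) : hh ε m ≤ gg ε m := by
  have hx0 := x_pos m
  have hx1 := x_one_le m
  set x : ℝ := (m:ℝ) with hxdef
  set S : ℝ := ∑ n ∈ Finset.Icc 1 (m : ℕ), (n : ℝ) ^ (-ε) with hSdef
  set B : ℝ := ∑' n : ℕ, ((m : ℝ) + 1 + (n : ℝ)) ^ (-2 - ε) with hBdef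
  have e1 : x^(-ε)*(1/x^2) = x^(-(2+ε)) := by
    rw [one_div, ← rpow_neg_two_eq _ hx0.le, ← Real.rpow_add hx0]; ring_nf
  -- part 1
  have hS : ((x+1)^(1-ε) - 1)/(1-ε) ≤ S := by
    have := sum_lb ε hε hε1 (m:ℕ)
    exact this
  have hmono : x^(1-ε) ≤ (x+1)^(1-ε) :=
    Real.rpow_le_rpow hx0.le (by linarith) (by linarith)
  have hS' : (x^(1-ε) - 1)/(1-ε) ≤ S := by
    refine le_trans ?_ hS
    gcongr
  have e2 : x^(-(2+ε)) * x^(1-ε) = x^(-(1+2*ε)) := by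
    rw [← Real.rpow_add hx0]; ring_nf
  have part1 : (x^(-(1+2*ε)) - x^(-(2+ε)))/(1-ε) ≤ x^(-ε) * ((1/x^2) * S) := by
    have hmul : x^(-(2+ε)) * ((x^(1-ε) - 1)/(1-ε)) ≤ x^(-(2+ε)) * S :=
      mul_le_mul_of_nonneg_left hS' (Real.rpow_nonneg hx0.le _)
    have hl : x^(-(2+ε)) * ((x^(1-ε) - 1)/(1-ε)) = (x^(-(1+2*ε)) - x^(-(2+ε)))/(1-ε) := by
      rw [mul_div_assoc'] ; rw [mul_sub, mul_one, e2]
    have hr : x^(-ε) * ((1/x^2) * S) = x^(-(2+ε)) * S := by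
      rw [← mul_assoc, e1]
    rw [hr, ← hl]; exact hmul
  -- part 2
  have hB : (x+1)^(-(1+ε))/(1+ε) ≤ B := tail_lb ε hε (x+1) (by linarith)
  have e3 : (x+1)^(-(1+2*ε)) = (x+1)^(-ε) * (x+1)^(-(1+ε)) := by
    rw [← Real.rpow_add (by linarith : (0:ℝ) < x+1)]; ring_nf
  have part2 : (x+1)^(-(1+2*ε))/(1+ε) ≤ x^(-ε) * B := by
    have hstep1 : (x+1)^(-(1+2*ε))/(1+ε) = (x+1)^(-ε) * ((x+1)^(-(1+ε))/(1+ε)) := by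
      rw [e3]; ring
    have hfac : (x+1)^(-ε) ≤ x^(-ε) :=
      Real.rpow_le_rpow_of_nonpos hx0 (by linarith) (by linarith)
    calc (x+1)^(-(1+2*ε))/(1+ε) = (x+1)^(-ε) * ((x+1)^(-(1+ε))/(1+ε)) := hstep1
      _ ≤ x^(-ε) * ((x+1)^(-(1+ε))/(1+ε)) := by
          apply mul_le_mul_of_nonneg_right hfac
          positivity
      _ ≤ x^(-ε) * B := mul_le_mul_of_nonneg_left hB (Real.rpow_nonneg hx0.le _)
  have : gg ε m = x^(-ε) * ((1/x^2) * S) + x^(-ε) * B := by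
    rw [gg]; ring
  rw [this, hh]
  exact add_le_add part1 part2

private lemma gg_nonneg (ε : ℝ) (hε : 0 < ε) (m : ℕ+) : 0 ≤ gg ε m := by
  have hx0 := x_pos m
  rw [gg]
  apply mul_nonneg (Real.rpow_nonneg hx0.le _)
  apply add_nonneg
  · apply mul_nonneg (by positivity)
    apply Finset.sum_nonneg
    intro i _
    exact Real.rpow_nonneg (Nat.cast_nonneg i) _
  · exact tsum_nonneg (fun k => Real.rpow_nonneg (by positivity) _)

private lemma summable_gg (ε : ℝ) (hε : 0 < ε) : Summable (gg ε) := by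
  set C : ℝ := ∑' k : ℕ, ((k:ℝ)+1)^(-(1+ε)) with hCdef
  have hCs : Summable (fun k : ℕ => ((k:ℝ)+1)^(-(1+ε))) := summable_shift' (by linarith)
  have hC0 : 0 ≤ C := tsum_nonneg (fun k => Real.rpow_nonneg (by positivity) _)
  have hbound : ∀ m : ℕ+, gg ε m ≤ (1+C) * (m:ℝ)^(-(1+ε)) := by
    intro m
    have hx0 := x_pos m
    have hx1 := x_one_le m
    set x : ℝ := (m:ℝ) with hxdef
    set S : ℝ := ∑ n ∈ Finset.Icc 1 (m : ℕ), (n : ℝ) ^ (-ε) with hSdef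
    set B : ℝ := ∑' n : ℕ, ((m : ℝ) + 1 + (n : ℝ)) ^ (-2 - ε) with hBdef
    have hSle : S ≤ x := by
      have h1 : S ≤ (Finset.Icc 1 (m:ℕ)).card • (1:ℝ) := by
        apply Finset.sum_le_card_nsmul
        intro i hi
        rw [Finset.mem_Icc] at hi
        exact Real.rpow_le_one_of_one_le_of_nonpos (by exact_mod_cast hi.1) (by linarith)
      rw [Nat.card_Icc] at h1
      simpa using h1
    have hA : (1/x^2) * S ≤ 1/x := by
      have : (1/x^2) * S ≤ (1/x^2) * x := by
        apply mul_le_mul_of_nonneg_left hSle (by positivity)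
      calc (1/x^2) * S ≤ (1/x^2) * x := this
        _ = 1/x := by field_simp
    have hBle : B ≤ (1/x) * C := by
      have hpt : ∀ k : ℕ, (x + 1 + (k:ℝ))^(-2-ε) ≤ (1/x) * ((k:ℝ)+1)^(-(1+ε)) := by
        intro k
        have hk : (0:ℝ) ≤ (k:ℝ) := Nat.cast_nonneg k
        have hy : (0:ℝ) < x + 1 + (k:ℝ) := by linarith
        have hsplit : (x + 1 + (k:ℝ))^(-2-ε)
            = (x + 1 + (k:ℝ))^(-1:ℝ) * (x + 1 + (k:ℝ))^(-(1+ε)) := by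
          rw [← Real.rpow_add hy]; ring_nf
        rw [hsplit]
        apply mul_le_mul
        · rw [Real.rpow_neg_one, one_div]
          exact inv_anti₀ hx0 (by linarith)
        · exact Real.rpow_le_rpow_of_nonpos (by linarith) (by linarith) (by linarith)
        · exact Real.rpow_nonneg hy.le _
        · positivity
      have hs1 : Summable (fun k : ℕ => (x + 1 + (k:ℝ))^(-2-ε)) := by
        have := summable_tail ε hε (x+1) (by linarith)
        apply this.congr
        intro k; ring_nf
      have hs2 : Summable (fun k : ℕ => (1/x) * ((k:ℝ)+1)^(-(1+ε))) := hCs.mul_left _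
      calc B ≤ ∑' k : ℕ, (1/x) * ((k:ℝ)+1)^(-(1+ε)) := Summable.tsum_le_tsum hpt hs1 hs2
        _ = (1/x) * C := tsum_mul_left
    have hxe : x^(-ε) * (1/x) = x^(-(1+ε)) := by
      rw [one_div, ← Real.rpow_neg_one x, ← Real.rpow_add hx0]; ring_nf
    calc gg ε m = x^(-ε) * ((1/x^2) * S + B) := rfl
      _ ≤ x^(-ε) * (1/x + (1/x) * C) := by
          apply mul_le_mul_of_nonneg_left _ (Real.rpow_nonneg hx0.le _)
          exact add_le_add hA hBle
      _ = (1+C) * (x^(-ε) * (1/x)) := by ring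
      _ = (1+C) * x^(-(1+ε)) := by rw [hxe]
  have hs : Summable (fun m : ℕ+ => (1+C) * (m:ℝ)^(-(1+ε))) :=
    (summable_pnat_rpow (by linarith)).mul_left _
  exact Summable.of_nonneg_of_le (fun m => gg_nonneg ε hε m) hbound hs

private lemma summable_hh (ε : ℝ) (hε : 0 < ε) : Summable (hh ε) := by
  have sa := summable_pnat_rpow (s := 1+2*ε) (by linarith)
  have sb := summable_pnat_rpow (s := 2+ε) (by linarith)
  have sc : Summable (fun m : ℕ+ => ((m:ℝ)+1)^(-(1+2*ε))) := by
    refine Summable.of_nonneg_of_le (fun m => Real.rpow_nonneg (by positivity) _)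
      (fun m => ?_) sa
    exact Real.rpow_le_rpow_of_nonpos (x_pos m) (by linarith) (by linarith)
  exact ((sa.sub sb).div_const _).add (sc.div_const _)

private lemma tsum_hh (ε : ℝ) (hε : 0 < ε) (hε1 : ε < 1) :
    ∑' m : ℕ+, hh ε m
      = (zetaR (1 + 2 * ε) - zetaR (2 + ε)) / (1 - ε) + (zetaR (1 + 2 * ε) - 1) / (1 + ε) := by
  have sa := summable_pnat_rpow (s := 1+2*ε) (by linarith)
  have sb := summable_pnat_rpow (s := 2+ε) (by linarith)
  have sc : Summable (fun m : ℕ+ => ((m:ℝ)+1)^(-(1+2*ε))) := by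
    refine Summable.of_nonneg_of_le (fun m => Real.rpow_nonneg (by positivity) _)
      (fun m => ?_) sa
    exact Real.rpow_le_rpow_of_nonpos (x_pos m) (by linarith) (by linarith)
  have h1 : ∑' m : ℕ+, hh ε m
      = (∑' m : ℕ+, ((m:ℝ)^(-(1+2*ε)) - (m:ℝ)^(-(2+ε)))/(1-ε))
        + ∑' m : ℕ+, ((m:ℝ)+1)^(-(1+2*ε))/(1+ε) :=
    Summable.tsum_add ((sa.sub sb).div_const _) (sc.div_const _)
  rw [h1, tsum_div_const, tsum_div_const, Summable.tsum_sub sa sb, zeta_shift (by linarith)]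
  rfl

private lemma hh_lt_gg_one (ε : ℝ) (hε : 0 < ε) (hε1 : ε < 1) : hh ε 1 < gg ε 1 := by
  have hc1 : ((1:ℕ+):ℝ) = 1 := by norm_cast
  have hg : 1 ≤ gg ε 1 := by
    have hsum : ∑ n ∈ Finset.Icc 1 ((1:ℕ+) : ℕ), (n : ℝ) ^ (-ε) = 1 := by
      norm_num [Real.one_rpow]
    rw [gg, hsum, hc1]
    norm_num [Real.one_rpow]
    exact tsum_nonneg (fun k => Real.rpow_nonneg (by positivity) _)
  have hhle : hh ε 1 ≤ 1/2 := by
    rw [hh, hc1, Real.one_rpow, Real.one_rpow]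
    have h2 : ((1:ℝ)+1)^(-(1+2*ε)) ≤ ((1:ℝ)+1)^(-1:ℝ) :=
      Real.rpow_le_rpow_of_exponent_le (by norm_num) (by linarith)
    have h3 : ((1:ℝ)+1)^(-1:ℝ) = 1/2 := by
      rw [Real.rpow_neg_one]; norm_num
    have h4 : ((1:ℝ)+1)^(-(1+2*ε))/(1+ε) ≤ ((1:ℝ)+1)^(-(1+2*ε)) :=
      div_le_self (Real.rpow_nonneg (by norm_num) _) (by linarith)
    calc (1-1)/(1-ε) + ((1:ℝ)+1)^(-(1+2*ε))/(1+ε)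
        = ((1:ℝ)+1)^(-(1+2*ε))/(1+ε) := by ring
      _ ≤ ((1:ℝ)+1)^(-(1+2*ε)) := h4
      _ ≤ ((1:ℝ)+1)^(-1:ℝ) := h2
      _ = 1/2 := h3
  linarith

theorem stmt9 (ε : ℝ) (hε : 0 < ε) (hε1 : ε < 1) :
    (∑' m : ℕ+, ∑' n : ℕ+, (m : ℝ) ^ (-(1 / 2 : ℝ) - ε) * (n : ℝ) ^ (-(1 / 2 : ℝ) - ε) *
        (Real.sqrt ((m : ℝ) * (n : ℝ)) / ((max (m : ℕ) (n : ℕ) : ℕ) : ℝ) ^ 2))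
      = ∑' m : ℕ+, (m : ℝ) ^ (-ε) *
          ((1 / (m : ℝ) ^ 2) * ∑ n ∈ Finset.Icc 1 (m : ℕ), (n : ℝ) ^ (-ε)
            + ∑' n : ℕ, ((m : ℝ) + 1 + (n : ℝ)) ^ (-2 - ε)) ∧
    (∑' m : ℕ+, ∑' n : ℕ+, (m : ℝ) ^ (-(1 / 2 : ℝ) - ε) * (n : ℝ) ^ (-(1 / 2 : ℝ) - ε) *
        (Real.sqrt ((m : ℝ) * (n : ℝ)) / ((max (m : ℕ) (n : ℕ) : ℕ) : ℝ) ^ 2))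
      > (zetaR (1 + 2 * ε) - zetaR (2 + ε)) / (1 - ε) + (zetaR (1 + 2 * ε) - 1) / (1 + ε) := by
  have heq : (∑' m : ℕ+, ∑' n : ℕ+, (m : ℝ) ^ (-(1 / 2 : ℝ) - ε) * (n : ℝ) ^ (-(1 / 2 : ℝ) - ε) *
        (Real.sqrt ((m : ℝ) * (n : ℝ)) / ((max (m : ℕ) (n : ℕ) : ℕ) : ℝ) ^ 2))
      = ∑' m : ℕ+, gg ε m := tsum_congr (fun m => inner_eq ε hε m)
  constructor
  · exact heq
  · rw [heq, gt_iff_lt, ← tsum_hh ε hε hε1]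
    exact Summable.tsum_lt_tsum (fun m => hh_le_gg ε hε hε1 m) (hh_lt_gg_one ε hε hε1)
      (summable_hh ε hε) (summable_gg ε hε)
end

section
/- There is no constant C < √2 such that (1/π)∫_{-∞}^∞ |ζ(1+ε+it)|² dt/(1+t²) ≤ C²·ζ(1+2ε) holds for all ε ∈ (0, 1/2). -/
open MeasureTheory Real Filter Topology


lemma zetaR_ofReal {s : ℝ} (hs : 1 < s) : (zetaR s : ℂ) = riemannZeta s := by
  rw [zeta_eq_tsum_one_div_nat_add_one_cpow (by simpa using hs), zetaR, Complex.ofReal_tsum,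
    ← Equiv.pnatEquivNat.symm.tsum_eq]
  congr 1 with n
  have h1 : ((Equiv.pnatEquivNat.symm n : ℕ+) : ℝ) = (n : ℝ) + 1 := by
    simp [Equiv.pnatEquivNat, Nat.succPNat]
  rw [h1, Complex.ofReal_cpow (by positivity), Complex.ofReal_neg, Complex.cpow_neg]
  push_cast
  rw [one_div]




lemma zetaR_bound : ∃ B : ℝ, ∀ᶠ s in 𝓝[>] (1:ℝ), zetaR s ≤ 1 / (s - 1) + B := by
  obtain ⟨L, hL⟩ : ∃ L, Tendsto (fun s : ℝ ↦ riemannZeta s - 1 / (s - 1)) (𝓝[>] 1) (𝓝 L) :=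
    ⟨_, ZetaAsymptotics.tendsto_riemannZeta_sub_one_div_nhds_right⟩
  refine ⟨‖L‖ + 1, ?_⟩
  filter_upwards [hL.norm.eventually_lt_const (lt_add_one _), self_mem_nhdsWithin] with s hs hs1
  have hz : zetaR s = (riemannZeta s).re := by
    rw [← zetaR_ofReal hs1, Complex.ofReal_re]
  have hre : (riemannZeta (s:ℂ) - 1 / ((s:ℂ) - 1)).re ≤ ‖riemannZeta (s:ℂ) - 1 / ((s:ℂ) - 1)‖ :=
    Complex.re_le_norm _
  have h2 : ((1:ℂ) / ((s:ℂ) - 1)).re = 1 / (s - 1) := by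
    rw [← Complex.ofReal_one, ← Complex.ofReal_sub, ← Complex.ofReal_div, Complex.ofReal_re]
  rw [hz]
  simp only [Complex.sub_re, h2] at hre
  linarith [hs.le]

lemma zeta_near_one : ∃ A : ℝ, 0 ≤ A ∧ ∃ δ : ℝ, 0 < δ ∧ ∀ s : ℂ, s ≠ 1 → ‖s - 1‖ < δ →
    ‖riemannZeta s - 1 / (s - 1)‖ ≤ A := by
  obtain ⟨L, hL⟩ : ∃ L, Tendsto (fun s : ℂ ↦ riemannZeta s - 1 / (s - 1)) (𝓝[≠] 1) (𝓝 L) :=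
    ⟨_, tendsto_riemannZeta_sub_one_div⟩
  have h2 := hL.norm.eventually_lt_const (lt_add_one ‖L‖)
  rw [eventually_iff, Metric.mem_nhdsWithin_iff] at h2
  obtain ⟨δ, hδ, hsub⟩ := h2
  refine ⟨‖L‖ + 1, by positivity, δ, hδ, fun s hs1 hsδ ↦ ?_⟩
  refine (hsub ⟨?_, hs1⟩).le
  rwa [Metric.mem_ball, Complex.dist_eq]


lemma zeta_line_ne {ε : ℝ} (hε : 0 < ε) (t : ℝ) : (1 + ε + Complex.I * t : ℂ) ≠ 1 := by
  intro h
  have := congrArg Complex.re h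
  simp at this
  linarith

lemma zeta_line_cont {ε : ℝ} (hε : 0 < ε) :
    Continuous fun t : ℝ ↦ riemannZeta (1 + ε + Complex.I * t) := by
  rw [continuous_iff_continuousAt]
  intro t
  have hc : ContinuousAt (fun z : ℂ ↦ riemannZeta z) (1 + ε + Complex.I * t) :=
    (differentiableAt_riemannZeta (zeta_line_ne hε t)).continuousAt
  have hc2 : Continuous fun t : ℝ ↦ (1 + (ε:ℂ) + Complex.I * t) := by fun_prop
  have h3 := ContinuousAt.comp (x := t) hc hc2.continuousAt
  exact h3

lemma zeta_line_bound {ε : ℝ} (hε : 0 < ε) (t : ℝ) :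
    ‖riemannZeta (1 + ε + Complex.I * t)‖ ≤ ∑' n : ℕ, 1 / ((n : ℝ) + 1) ^ (1 + ε) := by
  have hre : (1 + (ε:ℂ) + Complex.I * t).re = 1 + ε := by simp
  have hsum : Summable fun n : ℕ ↦ 1 / ((n : ℝ) + 1) ^ (1 + ε) := by
    have := (Real.summable_one_div_nat_add_rpow 1 (1 + ε)).mpr (by linarith)
    have habs : ∀ n : ℕ, |(n:ℝ) + 1| = (n:ℝ) + 1 := fun n ↦ abs_of_nonneg (by positivity)
    simpa only [habs] using this
  rw [zeta_eq_tsum_one_div_nat_add_one_cpow (by rw [hre]; linarith)]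
  have hnorm : ∀ n : ℕ, ‖1 / ((n : ℂ) + 1) ^ (1 + (ε:ℂ) + Complex.I * t)‖
      = 1 / ((n : ℝ) + 1) ^ (1 + ε) := by
    intro n
    rw [norm_div, norm_one]
    have : ((n : ℂ) + 1) = (((n : ℝ) + 1 : ℝ) : ℂ) := by push_cast; ring
    rw [this, Complex.norm_cpow_eq_rpow_re_of_pos (by positivity), hre]
  calc ‖∑' n : ℕ, 1 / ((n : ℂ) + 1) ^ (1 + (ε:ℂ) + Complex.I * t)‖
      ≤ ∑' n : ℕ, ‖1 / ((n : ℂ) + 1) ^ (1 + (ε:ℂ) + Complex.I * t)‖ :=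
        norm_tsum_le_tsum_norm (by simpa only [hnorm] using hsum)
    _ = _ := by simp only [hnorm]

lemma zeta_line_integrable {ε : ℝ} (hε : 0 < ε) :
    Integrable fun t : ℝ ↦ ‖riemannZeta (1 + ε + Complex.I * t)‖ ^ 2 / (1 + t ^ 2) := by
  set M := ∑' n : ℕ, 1 / ((n : ℝ) + 1) ^ (1 + ε) with hM
  have hM0 : 0 ≤ M := tsum_nonneg fun n ↦ by positivity
  refine ((integrable_inv_one_add_sq.const_mul (M ^ 2)).mono ?_ (ae_of_all _ fun t ↦ ?_))
  · exact (((zeta_line_cont hε).norm.pow 2).div (by fun_prop) fun t ↦ by positivity).aestronglyMeasurable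
  · have h1 := zeta_line_bound hε t
    have h2 : (0:ℝ) < 1 + t ^ 2 := by positivity
    rw [Real.norm_eq_abs, Real.norm_eq_abs, abs_of_nonneg (by positivity),
      abs_of_nonneg (by positivity)]
    rw [div_le_iff₀ h2]
    have h3 : ‖riemannZeta (1 + ε + Complex.I * t)‖ ^ 2 ≤ M ^ 2 :=
      pow_le_pow_left₀ (norm_nonneg _) h1 2
    calc ‖riemannZeta (1 + ε + Complex.I * t)‖ ^ 2 ≤ M ^ 2 := h3
      _ = M ^ 2 * (1 + t ^ 2)⁻¹ * (1 + t ^ 2) := by field_simp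


lemma integral_lower (ε T A : ℝ) (hε : 0 < ε) (hT : 0 ≤ T) :
    ∫ t in Set.Icc (-T) T, ((ε^2+t^2)⁻¹/(1+ε) - 2*A/ε)
      = (2/ε)*Real.arctan (T/ε)/(1+ε) - (2*A/ε)*(2*T) := by
  have hc : Continuous fun t : ℝ ↦ (ε^2+t^2)⁻¹/(1+ε) := by
    apply Continuous.div_const
    exact (continuous_const.add (continuous_pow 2)).inv₀ fun t ↦ (by positivity : ε^2+t^2 ≠ 0)
  rw [MeasureTheory.integral_Icc_eq_integral_Ioc, ← intervalIntegral.integral_of_le (by linarith),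
    intervalIntegral.integral_sub (hc.intervalIntegrable _ _) intervalIntegrable_const,
    intervalIntegral.integral_div, intervalIntegral.integral_const]
  have hkey : (∫ t in (-T)..T, (ε^2+t^2)⁻¹) = 2*Real.arctan (T/ε)/ε := by
    have h1 : ∀ t : ℝ, (ε^2+t^2)⁻¹ = ε⁻¹*ε⁻¹ * ((1+(t/ε)^2)⁻¹) := by
      intro t; field_simp
    simp_rw [h1]
    rw [intervalIntegral.integral_const_mul,
      intervalIntegral.integral_comp_div (f := fun x ↦ ((1:ℝ)+x^2)⁻¹) hε.ne',
      integral_inv_one_add_sq, smul_eq_mul, neg_div, Real.arctan_neg]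
    field_simp
    ring
  rw [hkey]
  simp only [smul_eq_mul]
  ring

lemma pointwise_lower {ε t A δ : ℝ} (hε : 0 < ε) (hε1 : ε < 1) (hδ0 : 0 < δ) (hεδ : 2*ε < δ^2) (hA : 0 ≤ A)
    (hAb : ∀ s : ℂ, s ≠ 1 → ‖s - 1‖ < δ → ‖riemannZeta s - 1/(s-1)‖ ≤ A)
    (ht : t ∈ Set.Icc (-Real.sqrt ε) (Real.sqrt ε)) :
    (ε^2+t^2)⁻¹/(1+ε) - 2*A/ε ≤ ‖riemannZeta (1+ε+Complex.I*t)‖^2/(1+t^2) := by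
  have ht2 : t^2 ≤ ε := by
    have h1 : |t| ≤ Real.sqrt ε := abs_le.2 ⟨ht.1, ht.2⟩
    have := Real.sq_sqrt hε.le
    nlinarith [abs_nonneg t, sq_abs t]
  set s : ℂ := 1+ε+Complex.I*t with hs
  have hsne : s ≠ 1 := by
    intro h
    have := congrArg Complex.re h
    simp [hs] at this
    linarith
  have hsub : s - 1 = (ε:ℂ) + t*Complex.I := by rw [hs]; ring
  set r : ℝ := Real.sqrt (ε^2+t^2) with hr
  have hnorm : ‖s - 1‖ = r := by
    rw [hsub, Complex.norm_add_mul_I]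
  have hrsq : r^2 = ε^2+t^2 := Real.sq_sqrt (by positivity)
  have hr0 : 0 < r := Real.sqrt_pos.2 (by positivity)
  have hrε : ε ≤ r := by
    rw [hr]
    exact (Real.le_sqrt hε.le (by positivity)).2 (by nlinarith)
  have hrδ : r < δ := by
    nlinarith [Real.sqrt_nonneg (ε^2+t^2)]
  have hAbd : ‖riemannZeta s - 1/(s-1)‖ ≤ A := hAb s hsne (by rw [hnorm]; exact hrδ)
  have hinv : ‖(1:ℂ)/(s-1)‖ = 1/r := by rw [norm_div, norm_one, hnorm]
  have hζ : 1/r - A ≤ ‖riemannZeta s‖ := by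
    have h0 : (1:ℂ)/(s-1) = riemannZeta s - (riemannZeta s - 1/(s-1)) := by ring
    have h1 : ‖(1:ℂ)/(s-1)‖ ≤ ‖riemannZeta s‖ + ‖riemannZeta s - 1/(s-1)‖ := by
      calc ‖(1:ℂ)/(s-1)‖ = ‖riemannZeta s - (riemannZeta s - 1/(s-1))‖ := by rw [← h0]
        _ ≤ _ := norm_sub_le (riemannZeta s) (riemannZeta s - 1/(s-1))
    rw [hinv] at h1
    linarith
  set n := ‖riemannZeta s‖ with hn
  have hn0 : 0 ≤ n := norm_nonneg _
  set x := 1/r with hx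
  have hx0 : 0 < x := by positivity
  have hx2 : x^2 = (ε^2+t^2)⁻¹ := by
    rw [hx, div_pow, one_pow, hrsq, one_div]
  have hxε : x ≤ 1/ε := by
    rw [hx]
    exact one_div_le_one_div_of_le hε hrε
  have h1 : x^2 - 2*A*x ≤ n^2 := by
    nlinarith [sq_nonneg (n - x + A), sq_nonneg n, mul_nonneg hA hx0.le, sq_nonneg x]
  have hden : (0:ℝ) < 1 + t^2 := by positivity
  have g1 : x^2/(1+ε) ≤ x^2/(1+t^2) := by
    apply div_le_div_of_nonneg_left (by positivity) hden
    linarith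
  have g2 : (2*A*x)/(1+t^2) ≤ 2*A/ε := by
    calc (2*A*x)/(1+t^2) ≤ 2*A*x := div_le_self (by positivity) (by nlinarith)
      _ ≤ 2*A*(1/ε) := by
          apply mul_le_mul_of_nonneg_left hxε (by positivity)
      _ = 2*A/ε := by ring
  have g3 : (x^2 - 2*A*x)/(1+t^2) ≤ n^2/(1+t^2) := by
    exact div_le_div_of_nonneg_right h1 hden.le
  rw [sub_div] at g3
  rw [← hx2]
  linarith



theorem stmt19 :
    ¬ ∃ C : ℝ, 0 ≤ C ∧ C < Real.sqrt 2 ∧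
      ∀ ε ∈ Set.Ioo (0 : ℝ) (1 / 2),
        (1 / π) * ∫ t : ℝ, ‖riemannZeta (1 + ε + Complex.I * t)‖ ^ 2 / (1 + t ^ 2)
          ≤ C ^ 2 * zetaR (1 + 2 * ε) := by
  rintro ⟨C, hC0, hCs, hC⟩
  have hC2 : C ^ 2 < 2 := by
    nlinarith [Real.sq_sqrt (by norm_num : (0:ℝ) ≤ 2), Real.sqrt_nonneg 2]
  obtain ⟨A, hA0, δ, hδ0, hAb⟩ := zeta_near_one
  obtain ⟨B, hB⟩ := zetaR_bound
  have hmap : Tendsto (fun ε : ℝ ↦ 1 + 2*ε) (𝓝[>] (0:ℝ)) (𝓝[>] (1:ℝ)) := by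
    rw [tendsto_nhdsWithin_iff]
    constructor
    · have h1 : Tendsto (fun ε : ℝ ↦ 1 + 2*ε) (𝓝 0) (𝓝 (1 + 2*0)) :=
        (continuous_const.add (continuous_const.mul continuous_id)).tendsto 0
      simpa using h1.mono_left nhdsWithin_le_nhds
    · filter_upwards [self_mem_nhdsWithin] with ε hε
      have : (0:ℝ) < ε := hε
      simp only [Set.mem_Ioi]
      linarith
  have hB' : ∀ᶠ ε in 𝓝[>] (0:ℝ), zetaR (1+2*ε) ≤ 1/(2*ε) + B := by
    filter_upwards [hmap.eventually hB] with ε h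
    simpa using h
  have hsqrt : Tendsto (fun ε : ℝ ↦ Real.sqrt ε) (𝓝[>] (0:ℝ)) (𝓝 0) :=
    (Real.continuous_sqrt.tendsto' 0 0 Real.sqrt_zero).mono_left nhdsWithin_le_nhds
  have hsqrt' : Tendsto (fun ε : ℝ ↦ Real.sqrt ε) (𝓝[>] (0:ℝ)) (𝓝[>] (0:ℝ)) := by
    rw [tendsto_nhdsWithin_iff]
    refine ⟨hsqrt, ?_⟩
    filter_upwards [self_mem_nhdsWithin] with ε hε
    exact Real.sqrt_pos.2 hε
  have harctan : Tendsto (fun ε : ℝ ↦ Real.arctan (1/Real.sqrt ε)) (𝓝[>] (0:ℝ)) (𝓝 (π/2)) := by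
    have h1 : Tendsto (fun ε : ℝ ↦ 1/Real.sqrt ε) (𝓝[>] (0:ℝ)) atTop := by
      simpa [one_div, Function.comp_def] using tendsto_inv_nhdsGT_zero.comp hsqrt'
    exact (tendsto_arctan_atTop.mono_right nhdsWithin_le_nhds).comp h1
  set G : ℝ → ℝ := fun ε ↦
    (1/π) * (2*Real.arctan (1/Real.sqrt ε)/(1+ε) - 4*A*Real.sqrt ε) - C^2*(1/2 + B*ε) with hGdef
  have hid : Tendsto (fun ε : ℝ ↦ ε) (𝓝[>] (0:ℝ)) (𝓝 0) :=
    tendsto_id.mono_left nhdsWithin_le_nhds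
  have hGlim : Tendsto G (𝓝[>] (0:ℝ)) (𝓝 (1 - C^2/2)) := by
    have h2 : Tendsto G (𝓝[>] (0:ℝ))
        (𝓝 ((1/π) * (2*(π/2)/(1+0) - 4*A*0) - C^2*(1/2 + B*0))) := by
      apply Tendsto.sub
      · apply Tendsto.const_mul
        apply Tendsto.sub
        · exact ((harctan.const_mul 2).div (tendsto_const_nhds.add hid) (by norm_num))
        · exact hsqrt.const_mul _
      · exact (tendsto_const_nhds.add (hid.const_mul B)).const_mul _
    convert h2 using 2
    have hπ := Real.pi_ne_zero
    field_simp
    ring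
  have hpos : 0 < 1 - C^2/2 := by linarith
  have hev := hGlim.eventually_const_lt hpos
  have hsmall : ∀ᶠ ε in 𝓝[>] (0:ℝ), ε < min (1/2) (δ^2/2) := by
    apply eventually_nhdsWithin_of_eventually_nhds
    exact eventually_lt_nhds (by positivity)
  obtain ⟨ε, ⟨hGε, hBε, hεsm⟩, hε0'⟩ :=
    ((hev.and (hB'.and hsmall)).and self_mem_nhdsWithin).exists
  have hε0 : (0:ℝ) < ε := hε0'
  have hεhalf : ε < 1/2 := lt_of_lt_of_le hεsm (min_le_left _ _)
  have hεδ : 2*ε < δ^2 := by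
    have := lt_of_lt_of_le hεsm (min_le_right _ _)
    linarith
  set T := Real.sqrt ε with hT
  have hT0 : 0 < T := Real.sqrt_pos.2 hε0
  have hint := zeta_line_integrable hε0
  have hstep1 : (∫ t in Set.Icc (-T) T, ‖riemannZeta (1 + ε + Complex.I * t)‖ ^ 2 / (1 + t ^ 2))
      ≤ ∫ t : ℝ, ‖riemannZeta (1 + ε + Complex.I * t)‖ ^ 2 / (1 + t ^ 2) :=
    setIntegral_le_integral hint (ae_of_all _ fun t ↦ by positivity)
  have hlowc : Continuous fun t : ℝ ↦ (ε^2+t^2)⁻¹/(1+ε) - 2*A/ε := by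
    apply Continuous.sub _ continuous_const
    exact ((continuous_const.add (continuous_pow 2)).inv₀ fun t ↦ (by positivity : ε^2+t^2 ≠ 0)).div_const _
  have hstep2 : (∫ t in Set.Icc (-T) T, ((ε^2+t^2)⁻¹/(1+ε) - 2*A/ε))
      ≤ ∫ t in Set.Icc (-T) T, ‖riemannZeta (1 + ε + Complex.I * t)‖ ^ 2 / (1 + t ^ 2) := by
    apply setIntegral_mono_on (hlowc.integrableOn_Icc) (hint.integrableOn) measurableSet_Icc
    intro t htm
    exact pointwise_lower hε0 (by linarith) hδ0 hεδ hA0 hAb htm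
  rw [integral_lower ε T A hε0 hT0.le] at hstep2
  have hTε : T/ε = 1/T := by
    rw [div_eq_div_iff hε0.ne' hT0.ne', one_mul, hT, Real.mul_self_sqrt hε0.le]
  rw [hTε] at hstep2
  have hπ : 0 < π := Real.pi_pos
  have hkey : (G ε + C^2*(1/2 + B*ε))/ε
      = (1/π) * ((2/ε)*Real.arctan (1/T) / (1+ε) - (2*A/ε)*(2*T)) := by
    rw [hGdef]
    have h1ε : (1:ℝ) + ε ≠ 0 := by positivity
    field_simp
    ring
  have hfin := hC ε ⟨hε0, hεhalf⟩
  have c1 : C^2 * zetaR (1+2*ε) ≤ C^2 * (1/(2*ε)+B) :=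
    mul_le_mul_of_nonneg_left hBε (sq_nonneg C)
  have c2 : C^2 * (1/(2*ε)+B) = (C^2*(1/2 + B*ε))/ε := by
    have h : (1:ℝ)/(2*ε)+B = (1/2 + B*ε)/ε := by
      field_simp
    rw [h, mul_div_assoc]
  have c3 : (C^2*(1/2 + B*ε))/ε < (G ε + C^2*(1/2 + B*ε))/ε :=
    (div_lt_div_iff_of_pos_right hε0).2 (lt_add_of_pos_left _ hGε)
  have c4 : (1/π) * ((2/ε)*Real.arctan (1/T) / (1+ε) - (2*A/ε)*(2*T))
      ≤ (1/π) * ∫ t : ℝ, ‖riemannZeta (1 + ε + Complex.I * t)‖ ^ 2 / (1 + t ^ 2) :=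
    mul_le_mul_of_nonneg_left (hstep2.trans hstep1) (by positivity)
  rw [hkey] at c3
  linarith
end
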